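/- arXiv:2411.07214 — 4 statements merged into one kernel-verified Lean document; each statement's English description precedes it below -/
import Mathlib

section
/- Let H be a finite hypergraph without multiple edges. Then the sum of the squares of the eigenvalues of U(H) equals (Σ_{S ∈ I(H)} d_H(S)) − ∂(H), where ∂(H) is the number of edges of cardinality at least 2 that are properly contained in another edge. -/
variable {V : Type} [Fintype V] [DecidableEq V]

/-- A finite hypergraph: a finite vertex set and a multiset of nonempty edges. -/
structure FinHypergraph (V : Type) [Fintype V] [DecidableEq V] where
  verts : Finset V
  edges : Multiset (Finset V)
  edges_sub : ∀ e ∈ edges, e ⊆ verts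
  edges_nonempty : ∀ e ∈ edges, e.Nonempty

open Classical in
/-- `IH H` is `I(H)`: all parts of 2-partitions of edges plus all singletons of `V(H)`. -/
noncomputable def IH (H : FinHypergraph V) : Finset (Finset V) :=
  Finset.univ.filter fun S =>
    (S.Nonempty ∧ ∃ e ∈ H.edges, S ⊂ e) ∨ ∃ v ∈ H.verts, S = {v}

/-- The unified matrix of a hypergraph, indexed by `I(H)`. -/
noncomputable def U (H : FinHypergraph V) : Matrix ↥(IH H) ↥(IH H) ℝ := fun S T =>
  if (S : Finset V) = (T : Finset V) then
    (if (S : Finset V).card = 1 then (H.edges.count (S : Finset V) : ℝ) else 0)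
  else if Disjoint (S : Finset V) (T : Finset V) then
    (H.edges.count ((S : Finset V) ∪ (T : Finset V)) : ℝ)
  else 0

/-- Degree of a vertex: number of edges (with multiplicity) containing it. -/
def deg (H : FinHypergraph V) (v : V) : ℕ := (H.edges.filter (fun e => v ∈ e)).card

/-- Unified degree of a set `S`: number of edges (with multiplicity) containing `S`. -/
def udeg (H : FinHypergraph V) (S : Finset V) : ℕ := (H.edges.filter (fun e => S ⊆ e)).card

/-- `incl H` = ∂(H): number of edges of cardinality ≥ 2 properly contained in another edge. -/
noncomputable def incl (H : FinHypergraph V) : ℕ :=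
  Multiset.card (H.edges.filter (fun e => 2 ≤ e.card ∧ ∃ e' ∈ H.edges, e ⊂ e'))

/-- A hypergraph is simple if it has no multiple edges and no loops. -/
def Simple (H : FinHypergraph V) : Prop :=
  H.edges.Nodup ∧ ∀ e ∈ H.edges, 2 ≤ e.card

/-- `tau S` = τ(S): the set of unordered 2-partitions of `S`. -/
def tau (S : Finset V) : Finset (Finset (Finset V)) :=
  (S.powerset.filter fun A => A.Nonempty ∧ A ⊂ S).image fun A => {A, S \ A}

/-! ### Auxiliary lemmas -/

/-- A natural-number version of the unified matrix entries, relative to a set `E` of edges. -/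
def gEnt (E : Finset (Finset V)) (S T : Finset V) : ℕ :=
  if S = T then (if S.card = 1 ∧ S ∈ E then 1 else 0)
  else if Disjoint S T ∧ S ∪ T ∈ E then 1 else 0

lemma gEnt_symm (E : Finset (Finset V)) (S T : Finset V) : gEnt E S T = gEnt E T S := by
  unfold gEnt
  rcases eq_or_ne S T with h | h
  · subst h; rfl
  · rw [if_neg h, if_neg (Ne.symm h)]
    have : (Disjoint S T ∧ S ∪ T ∈ E) ↔ (Disjoint T S ∧ T ∪ S ∈ E) := by
      rw [disjoint_comm, Finset.union_comm]
    simp [this]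

lemma gEnt_le_one (E : Finset (Finset V)) (S T : Finset V) : gEnt E S T ≤ 1 := by
  unfold gEnt; split_ifs <;> simp

lemma mem_IH_iff {H : FinHypergraph V} {S : Finset V} :
    S ∈ IH H ↔ (S.Nonempty ∧ ∃ e ∈ H.edges, S ⊂ e) ∨ ∃ v ∈ H.verts, S = {v} := by
  simp [IH]

lemma IH_nonempty {H : FinHypergraph V} {S : Finset V} (h : S ∈ IH H) : S.Nonempty := by
  rcases mem_IH_iff.mp h with ⟨h1, _⟩ | ⟨v, _, rfl⟩
  · exact h1
  · exact Finset.singleton_nonempty v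

lemma udeg_eq (H : FinHypergraph V) (hd : H.edges.Nodup) (S : Finset V) :
    udeg H S = (H.edges.toFinset.filter (fun e => S ⊆ e)).card := by
  rw [udeg, ← Multiset.toFinset_filter, Multiset.toFinset_card_of_nodup (hd.filter _)]

lemma incl_eq (H : FinHypergraph V) (hd : H.edges.Nodup) :
    incl H = (H.edges.toFinset.filter
      (fun e => 2 ≤ e.card ∧ ∃ e' ∈ H.edges, e ⊂ e')).card := by
  rw [incl, ← Multiset.toFinset_filter, Multiset.toFinset_card_of_nodup (hd.filter _)]

/-- The key bijection: pairs `(S,T)` with `T` disjoint from `S` and `S ∪ T` an edge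
correspond to edges strictly containing `S`. -/
lemma card_bij_lemma (H : FinHypergraph V) {S : Finset V} (hS : S ∈ IH H) :
    (((IH H).erase S).filter (fun T => Disjoint S T ∧ S ∪ T ∈ H.edges.toFinset)).card
      = (H.edges.toFinset.filter (fun e => S ⊂ e)).card := by
  apply Finset.card_bij' (fun T _ => S ∪ T) (fun e _ => e \ S)
  · intro T hT
    simp only [Finset.mem_filter, Finset.mem_erase] at hT
    obtain ⟨⟨hTS, hTIH⟩, hdisj, hmem⟩ := hT
    simp only [Finset.mem_filter]
    refine ⟨hmem, Finset.ssubset_iff_subset_ne.mpr ⟨Finset.subset_union_left, ?_⟩⟩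
    intro hc
    have hTsub : T ⊆ S := by rw [hc]; exact Finset.subset_union_right
    have : T = ∅ := by simpa using hdisj.symm.eq_bot_of_le hTsub
    exact (IH_nonempty hTIH).ne_empty this
  · intro e he
    simp only [Finset.mem_filter] at he
    obtain ⟨hmem, hss⟩ := he
    have hemem : e ∈ H.edges := Multiset.mem_toFinset.mp hmem
    have hne : (e \ S).Nonempty := by
      rw [Finset.sdiff_nonempty]
      exact fun hc => hss.not_subset hc
    simp only [Finset.mem_filter, Finset.mem_erase]
    refine ⟨⟨?_, ?_⟩, ?_, ?_⟩
    · intro hc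
      have h0 : Disjoint S (e \ S) := Finset.disjoint_sdiff
      rw [hc] at h0
      exact (IH_nonempty hS).ne_empty (by simpa using h0.eq_bot_of_le le_rfl)
    · refine mem_IH_iff.mpr (Or.inl ⟨hne, e, hemem, ?_⟩)
      exact Finset.sdiff_ssubset hss.subset (IH_nonempty hS)
    · exact Finset.disjoint_sdiff
    · rwa [Finset.union_sdiff_of_subset hss.subset]
  · intro T hT
    simp only [Finset.mem_filter, Finset.mem_erase] at hT
    exact Finset.union_sdiff_cancel_left hT.2.1
  · intro e he
    simp only [Finset.mem_filter] at he
    exact Finset.union_sdiff_of_subset he.2.subset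

/-- Row identity: row sums of the unified matrix, corrected by included edges, give `udeg`. -/
lemma row_lemma (H : FinHypergraph V) (hd : H.edges.Nodup) {S : Finset V} (hS : S ∈ IH H) :
    (∑ T ∈ IH H, gEnt H.edges.toFinset S T)
      + (if S ∈ H.edges.toFinset ∧ S.card ≠ 1 then 1 else 0) = udeg H S := by
  classical
  set E := H.edges.toFinset with hE
  -- split off the diagonal term
  have hsplit : ∑ T ∈ IH H, gEnt E S T
      = gEnt E S S + ∑ T ∈ (IH H).erase S, gEnt E S T :=
    (Finset.add_sum_erase _ _ hS).symm
  have hoff : ∑ T ∈ (IH H).erase S, gEnt E S T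
      = (((IH H).erase S).filter (fun T => Disjoint S T ∧ S ∪ T ∈ E)).card := by
    rw [Finset.card_filter]
    apply Finset.sum_congr rfl
    intro T hT
    have hne : S ≠ T := fun h => (Finset.mem_erase.mp hT).1 h.symm
    simp [gEnt, hne]
  have hdiag : gEnt E S S = if S.card = 1 ∧ S ∈ E then 1 else 0 := by simp [gEnt]
  have hudeg : udeg H S
      = (E.filter (fun e => S ⊂ e)).card + (if S ∈ E then 1 else 0) := by
    rw [udeg_eq H hd S, ← hE]
    have h1 : E.filter (fun e => S ⊆ e)
        = (E.filter (fun e => S ⊂ e)) ∪ (E.filter (fun e => e = S)) := by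
      ext e
      simp only [Finset.mem_filter, Finset.mem_union]
      constructor
      · rintro ⟨he, hsub⟩
        rcases eq_or_ne e S with h | h
        · exact Or.inr ⟨he, h⟩
        · exact Or.inl ⟨he, Finset.ssubset_iff_subset_ne.mpr ⟨hsub, fun hc => h hc.symm⟩⟩
      · rintro (⟨he, hsub⟩ | ⟨he, rfl⟩)
        · exact ⟨he, hsub.subset⟩
        · exact ⟨he, le_rfl⟩
    have h2 : Disjoint (E.filter (fun e => S ⊂ e)) (E.filter (fun e => e = S)) := by
      rw [Finset.disjoint_left]
      intro e hea heb
      simp only [Finset.mem_filter] at hea heb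
      exact hea.2.ne heb.2.symm
    rw [h1, Finset.card_union_of_disjoint h2, Finset.filter_eq']
    split_ifs <;> simp
  rw [hsplit, hoff, hdiag, card_bij_lemma H hS, hudeg, ← hE]
  by_cases hmem : S ∈ E <;> by_cases hcard : S.card = 1 <;> simp [hmem, hcard] <;> omega

/-- The corrected diagonal entries sum to `incl`. -/
lemma incl_lemma (H : FinHypergraph V) (hd : H.edges.Nodup) :
    (∑ S ∈ IH H, if S ∈ H.edges.toFinset ∧ S.card ≠ 1 then 1 else 0) = incl H := by
  classical
  rw [incl_eq H hd, ← Finset.card_filter]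
  congr 1
  ext e
  simp only [Finset.mem_filter, Multiset.mem_toFinset]
  constructor
  · rintro ⟨hIH, he, hcard⟩
    have h1 : 1 ≤ e.card := Finset.card_pos.mpr (H.edges_nonempty e he)
    refine ⟨he, by omega, ?_⟩
    rcases mem_IH_iff.mp hIH with ⟨_, e', he', hss⟩ | ⟨v, _, rfl⟩
    · exact ⟨e', he', hss⟩
    · simp at hcard
  · rintro ⟨he, hcard, e', he', hss⟩
    refine ⟨mem_IH_iff.mpr (Or.inl ⟨Finset.card_pos.mp (by omega), e', he', hss⟩), he, by omega⟩

lemma sum_sq_eig {n : Type*} [Fintype n] [DecidableEq n] {A : Matrix n n ℝ}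
    (hA : A.IsHermitian) :
    ∑ i, hA.eigenvalues i ^ 2 = Matrix.trace (A * A) := by
  set Vm := (Matrix.IsHermitian.eigenvectorUnitary hA : Matrix n n ℝ) with hVm
  set D := Matrix.diagonal ((RCLike.ofReal : ℝ → ℝ) ∘ hA.eigenvalues) with hD
  have hsV : star Vm * Vm = 1 :=
    (Matrix.mem_unitaryGroup_iff').mp (Matrix.IsHermitian.eigenvectorUnitary hA).2
  have h := hA.spectral_theorem
  calc ∑ i, hA.eigenvalues i ^ 2 = Matrix.trace (D * D) := by
        simp [hD, Matrix.diagonal_mul_diagonal, Matrix.trace_diagonal, sq]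
    _ = Matrix.trace (Vm * D * (star Vm * Vm) * D * star Vm) := by
        rw [hsV]
        rw [Matrix.mul_one, Matrix.trace_mul_cycle]
        rw [show star Vm * (Vm * D) * D = (star Vm * Vm) * D * D by noncomm_ring, hsV,
          Matrix.one_mul]
    _ = Matrix.trace (A * A) := by
        conv_rhs => rw [h, Unitary.conjStarAlgAut_apply]
        congr 1
        noncomm_ring

lemma U_eq_gEnt (H : FinHypergraph V) (hd : H.edges.Nodup) (S T : ↥(IH H)) :
    U H S T = (gEnt H.edges.toFinset (S : Finset V) (T : Finset V) : ℝ) := by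
  have hcount : ∀ e : Finset V, H.edges.count e = if e ∈ H.edges.toFinset then 1 else 0 := by
    intro e
    rw [Multiset.count_eq_of_nodup hd]
    simp [Multiset.mem_toFinset]
  unfold U gEnt
  split_ifs with h1 h2 h3 h4 h5 h6 h7 <;>
    simp_all [hcount] <;> omega

theorem sum_sq_eigenvalues_of_nodup (H : FinHypergraph V) (hd : H.edges.Nodup)
    (hU : (U H).IsHermitian) :
    ∑ i, (hU.eigenvalues i) ^ 2 =
      (∑ S ∈ IH H, (udeg H S : ℝ)) - (incl H : ℝ) := by
  classical
  set E := H.edges.toFinset with hE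
  have htr : ∑ i, (hU.eigenvalues i) ^ 2
      = ∑ S : ↥(IH H), ∑ T : ↥(IH H), U H S T * U H T S := by
    rw [sum_sq_eig hU]
    simp [Matrix.trace, Matrix.mul_apply, Matrix.diag]
  have hmul : ∀ S T : ↥(IH H), U H S T * U H T S
      = (gEnt E (S : Finset V) (T : Finset V) : ℝ) := by
    intro S T
    rw [U_eq_gEnt H hd, U_eq_gEnt H hd, gEnt_symm E (T : Finset V) (S : Finset V)]
    have := gEnt_le_one E (S : Finset V) (T : Finset V)
    interval_cases h : gEnt E (S : Finset V) (T : Finset V) <;> simp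
  have hkey : (∑ S ∈ IH H, ∑ T ∈ IH H, gEnt E S T) + incl H = ∑ S ∈ IH H, udeg H S := by
    rw [← incl_lemma H hd, ← Finset.sum_add_distrib]
    exact Finset.sum_congr rfl fun S hS => row_lemma H hd hS
  rw [htr]
  have : ∑ S : ↥(IH H), ∑ T : ↥(IH H), U H S T * U H T S
      = ((∑ S ∈ IH H, ∑ T ∈ IH H, gEnt E S T : ℕ) : ℝ) := by
    push_cast
    rw [← Finset.sum_coe_sort (IH H) (fun S => ∑ T ∈ IH H, (gEnt E S T : ℝ))]
    apply Finset.sum_congr rfl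
    intro S _
    rw [← Finset.sum_coe_sort (IH H) (fun T => (gEnt E (S : Finset V) T : ℝ))]
    exact Finset.sum_congr rfl fun T _ => hmul S T
  rw [this]
  have := hkey
  push_cast
  have hc : ((∑ S ∈ IH H, ∑ T ∈ IH H, gEnt E S T : ℕ) : ℝ) + (incl H : ℝ)
      = ((∑ S ∈ IH H, udeg H S : ℕ) : ℝ) := by exact_mod_cast congrArg Nat.cast hkey
  push_cast at hc
  linarith
end

section
/- Let H be a simple hypergraph with e-index k. Then the following are equivalent: (i) H has no odd exact cycle; (ii) every odd-indexed coefficient c_{2r+1} of the characteristic polynomial x^k + c_1 x^{k-1} + ... + c_k of U(H) vanishes; (iii) the spectrum of U(H) is symmetric about the origin, i.e., λ is an eigenvalue of multiplicity r iff −λ is an eigenvalue of multiplicity r. -/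
variable {V : Type} [Fintype V] [DecidableEq V]

/-- Two parts are adjacent when they form a 2-partition of an edge of `H`. -/
def Adj (H : FinHypergraph V) (S T : Finset V) : Prop :=
  S.Nonempty ∧ T.Nonempty ∧ Disjoint S T ∧ S ∪ T ∈ H.edges

/-- There is an exact path of length `n` joining some `S ∋ u` and `S' ∋ v`. -/
def ExactPathBetween (H : FinHypergraph V) (u v : V) (n : ℕ) : Prop :=
  ∃ l : List (Finset V), l.length = n + 1 ∧ l.Nodup ∧ (∀ S ∈ l, S ∈ IH H) ∧
    l.Chain' (Adj H) ∧ (∃ S, l.head? = some S ∧ u ∈ S) ∧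
    (∃ S, l.getLast? = some S ∧ v ∈ S)

/-- `H` has an odd exact cycle: a closed exact walk with all internal parts distinct,
using at least three distinct edges, of odd length. -/
def HasOddExactCycle (H : FinHypergraph V) : Prop :=
  ∃ l : List (Finset V), 2 ≤ l.length ∧ l.head? = l.getLast? ∧
    l.dropLast.Nodup ∧ l.Chain' (Adj H) ∧
    3 ≤ ((l.zip l.tail).map (fun p => p.1 ∪ p.2)).toFinset.card ∧
    Odd (l.length - 1)



open Polynomial Matrix

namespace OddCycAux

lemma comp_neg_comp (p : ℝ[X]) : (p.comp (-X)).comp (-X) = p := by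
  rw [Polynomial.comp_assoc]
  simp

lemma coeff_comp_neg (p : ℝ[X]) (n : ℕ) : (p.comp (-X)).coeff n = (-1)^n * p.coeff n := by
  induction p using Polynomial.induction_on' with
  | add p q hp hq => simp [add_comp, hp, hq, mul_add]
  | monomial m a =>
      have h1 : (monomial m a).comp (-X) = C ((-1)^m * a) * X^m := by
        rw [monomial_comp, neg_pow]
        rw [show ((-1:ℝ[X]))^m = C ((-1 : ℝ)^m) by rw [map_pow, map_neg, Polynomial.C_1]]
        rw [← mul_assoc, ← Polynomial.C_mul, mul_comm a ((-1:ℝ)^m)]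
      rw [h1, coeff_C_mul, coeff_X_pow, coeff_monomial]
      by_cases h : m = n
      · simp [h]
      · simp only [if_neg h, if_neg (fun hh : n = m => h hh.symm), mul_zero]

lemma dvd_comp_neg_iff (p : ℝ[X]) (μ : ℝ) (n : ℕ) :
    (X - C μ)^n ∣ p.comp (-X) ↔ (X - C (-μ))^n ∣ p := by
  have hmap : ∀ q r : ℝ[X], q ∣ r → q.comp (-X) ∣ r.comp (-X) := by
    rintro q r ⟨c, rfl⟩
    exact ⟨c.comp (-X), by rw [mul_comp]⟩
  have e1 : ((X - C μ)^n).comp (-X) = (-1)^n * (X - C (-μ))^n := by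
    rw [pow_comp, sub_comp, X_comp, C_comp]
    rw [show -X - C μ = (-1) * (X - C (-μ)) by rw [map_neg]; ring, mul_pow]
  have e2 : ((X - C (-μ))^n).comp (-X) = (-1)^n * (X - C μ)^n := by
    rw [pow_comp, sub_comp, X_comp, C_comp]
    rw [show -X - C (-μ) = (-1) * (X - C μ) by rw [map_neg]; ring, mul_pow]
  constructor
  · intro h
    have h2 := hmap _ _ h
    rw [comp_neg_comp, e1] at h2
    obtain ⟨c, hc⟩ := h2
    exact ⟨(-1)^n * c, by rw [hc]; ring⟩
  · intro h
    have h2 := hmap _ _ h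
    rw [e2] at h2
    obtain ⟨c, hc⟩ := h2
    exact ⟨(-1)^n * c, by rw [hc]; ring⟩

lemma comp_neg_ne_zero {p : ℝ[X]} (hp : p ≠ 0) : p.comp (-X) ≠ 0 := by
  intro h
  apply hp
  have := congrArg (fun q => Polynomial.comp q (-X)) h
  simpa [comp_neg_comp] using this

lemma rm_comp_neg (p : ℝ[X]) (hp : p ≠ 0) (μ : ℝ) :
    (p.comp (-X)).rootMultiplicity μ = p.rootMultiplicity (-μ) := by
  have hc : p.comp (-X) ≠ 0 := comp_neg_ne_zero hp
  apply le_antisymm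
  · rw [Polynomial.le_rootMultiplicity_iff hp]
    rw [← dvd_comp_neg_iff]
    exact Polynomial.pow_rootMultiplicity_dvd _ _
  · rw [Polynomial.le_rootMultiplicity_iff hc, dvd_comp_neg_iff]
    exact Polynomial.pow_rootMultiplicity_dvd _ _

lemma coeff_cond_iff (p : ℝ[X]) (k : ℕ) (hd : p.natDegree = k) :
    (∀ r : ℕ, 2*r+1 ≤ k → p.coeff (k - (2*r+1)) = 0) ↔ p.comp (-X) = C ((-1)^k) * p := by
  constructor
  · intro h
    ext n
    rw [coeff_comp_neg, coeff_C_mul]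
    by_cases hn : k < n
    · rw [Polynomial.coeff_eq_zero_of_natDegree_lt (hd ▸ hn)]
      ring
    · push_neg at hn
      rcases Nat.even_or_odd (k - n) with he | ho
      · have : (-1 : ℝ)^k = (-1)^n := by
          have : k = n + (k - n) := by omega
          rw [this, pow_add, he.neg_one_pow, mul_one]
        rw [this]
      · obtain ⟨r, hr⟩ := ho
        have hn' : n = k - (2*r+1) := by omega
        have h0 : p.coeff n = 0 := by rw [hn']; exact h r (by omega)
        rw [h0]; ring
  · intro h r hr
    have := congrArg (fun q => Polynomial.coeff q (k - (2*r+1))) h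
    simp only [coeff_comp_neg, coeff_C_mul] at this
    set n := k - (2*r+1) with hn
    have hk : k = n + (2*r+1) := by omega
    have hsign : (-1 : ℝ)^k = -(-1 : ℝ)^n := by
      rw [hk, pow_add, pow_succ, pow_mul]
      simp
    rw [hsign] at this
    have h2 : ((-1 : ℝ)^n) * p.coeff n = -(((-1:ℝ)^n) * p.coeff n) := by linarith
    have h3 : ((-1 : ℝ)^n) * p.coeff n = 0 := by linarith
    rcases mul_eq_zero.mp h3 with h4 | h4
    · exact absurd h4 (pow_ne_zero _ (by norm_num))
    · exact h4

lemma roots_map_neg_eq (p : ℝ[X]) (hp : p ≠ 0)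
    (h : ∀ μ : ℝ, p.rootMultiplicity μ = p.rootMultiplicity (-μ)) :
    p.roots.map (fun a => -a) = p.roots := by
  classical
  ext a
  have hinj : Function.Injective (fun a : ℝ => -a) := fun x y hxy => by simpa using hxy
  have : a = (fun a : ℝ => -a) (-a) := by simp
  rw [this, Multiset.count_map_eq_count' _ _ hinj, Polynomial.count_roots,
    Polynomial.count_roots]
  simp only
  rw [h (-a), neg_neg]

lemma comp_of_rm (p : ℝ[X]) (hm : p.Monic) (k : ℕ) (hd : p.natDegree = k)
    (hsp : p.Splits)
    (h : ∀ μ : ℝ, p.rootMultiplicity μ = p.rootMultiplicity (-μ)) :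
    p.comp (-X) = C ((-1)^k) * p := by
  have hp0 : p ≠ 0 := hm.ne_zero
  have hcard : p.roots.card = k := by
    rw [← hd]
    exact (Polynomial.splits_iff_card_roots.mp hsp)
  conv_lhs => rw [hsp.eq_prod_roots_of_monic hm]
  have hcomp : ∀ (s : Multiset ℝ[X]), (s.prod).comp (-X) = (s.map (fun q => q.comp (-X))).prod := by
    intro s
    have := map_multiset_prod (Polynomial.eval₂RingHom (C : ℝ →+* ℝ[X]) (-X)) s
    simpa [Polynomial.comp] using this
  rw [hcomp, Multiset.map_map]
  have step2 : ((fun q : ℝ[X] => q.comp (-X)) ∘ fun a : ℝ => X - C a)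
      = fun a : ℝ => C (-1) * (X - C (-a)) := by
    funext a
    simp only [Function.comp_apply, sub_comp, X_comp, C_comp, map_neg, Polynomial.C_1]
    ring
  rw [step2]
  have step3 : p.roots.map (fun a : ℝ => C (-1 : ℝ) * (X - C (-a)))
      = (p.roots.map (fun a : ℝ => -a)).map (fun a : ℝ => C (-1 : ℝ) * (X - C a)) := by
    rw [Multiset.map_map]; rfl
  rw [step3, roots_map_neg_eq p hp0 h]
  rw [show (fun a : ℝ => C (-1 : ℝ) * (X - C a))
      = (fun a : ℝ => C (-1 : ℝ) * ((fun b : ℝ => X - C b) a)) from rfl]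
  rw [Multiset.prod_map_mul]
  have hconst : (p.roots.map fun _ : ℝ => C (-1 : ℝ)).prod = C ((-1 : ℝ)^k) := by
    rw [Multiset.map_const', Multiset.prod_replicate, hcard, ← map_pow]
  rw [hconst, ← hsp.eq_prod_roots_of_monic hm]

lemma rm_of_comp (p : ℝ[X]) (hp : p ≠ 0) (k : ℕ) (h : p.comp (-X) = C ((-1)^k) * p) (μ : ℝ) :
    p.rootMultiplicity μ = p.rootMultiplicity (-μ) := by
  have h1 := rm_comp_neg p hp μ
  rw [h] at h1
  have hC : (C ((-1:ℝ)^k)) ≠ 0 := by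
    rw [ne_eq, Polynomial.C_eq_zero]
    exact pow_ne_zero _ (by norm_num)
  rw [Polynomial.rootMultiplicity_mul (mul_ne_zero hC hp), Polynomial.rootMultiplicity_C] at h1
  omega

section MatrixPart

variable {n : Type*} [Fintype n] [DecidableEq n]

lemma charmatrix_conj (M P Q : Matrix n n ℝ) (h1 : P * Q = 1) :
    charmatrix (P * M * Q) = (P.map C) * charmatrix M * (Q.map C) := by
  have hPQ : (P.map (C : ℝ →+* ℝ[X])) * (Q.map C) = 1 := by
    rw [← Matrix.map_mul, h1]
    exact Matrix.map_one _ (map_zero C) (map_one C)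
  rw [charmatrix, charmatrix, Matrix.mul_sub, Matrix.sub_mul]
  congr 1
  · have hc : Commute (Matrix.scalar n (X : ℝ[X])) (P.map C) :=
      Matrix.scalar_commute _ (fun r' => Commute.all _ _) _
    rw [← hc.eq, mul_assoc, hPQ, mul_one]
  · simp only [RingHom.mapMatrix_apply, Matrix.map_mul]

lemma charpoly_conj' (M P Q : Matrix n n ℝ) (h1 : P * Q = 1) :
    (P * M * Q).charpoly = M.charpoly := by
  have hPQ : (P.map (C : ℝ →+* ℝ[X])) * (Q.map C) = 1 := by
    rw [← Matrix.map_mul, h1]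
    exact Matrix.map_one _ (map_zero C) (map_one C)
  rw [Matrix.charpoly, Matrix.charpoly, charmatrix_conj M P Q h1, Matrix.det_mul,
    Matrix.det_mul]
  have hdet : (P.map (C : ℝ →+* ℝ[X])).det * (Q.map C).det = 1 := by
    rw [← Matrix.det_mul, hPQ, Matrix.det_one]
  rw [mul_right_comm, hdet, one_mul]

lemma charpoly_diagonal (d : n → ℝ) :
    (Matrix.diagonal d).charpoly = ∏ i, (X - C (d i)) := by
  have hcm : charmatrix (Matrix.diagonal d) = Matrix.diagonal (fun i => X - C (d i)) := by
    ext i j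
    by_cases h : i = j
    · subst h
      simp
    · rw [charmatrix_apply_ne _ _ _ h, Matrix.diagonal_apply_ne _ h,
        Matrix.diagonal_apply_ne _ h]
      simp
  rw [Matrix.charpoly, hcm, Matrix.det_diagonal]

variable {A : Matrix n n ℝ} (hA : A.IsHermitian)

lemma real_spectral (hA : A.IsHermitian) :
    A = (hA.eigenvectorUnitary : Matrix n n ℝ) * Matrix.diagonal hA.eigenvalues
      * star (hA.eigenvectorUnitary : Matrix n n ℝ) := by
  have h := hA.spectral_theorem
  rw [Unitary.conjStarAlgAut_apply] at h
  exact h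

lemma charpoly_eq_prod (hA : A.IsHermitian) :
    A.charpoly = ∏ i, (X - C (hA.eigenvalues i)) := by
  have h1 : (hA.eigenvectorUnitary : Matrix n n ℝ)
      * star (hA.eigenvectorUnitary : Matrix n n ℝ) = 1 :=
    Matrix.mem_unitaryGroup_iff.mp hA.eigenvectorUnitary.2
  conv_lhs => rw [real_spectral hA]
  rw [charpoly_conj' _ _ _ h1, charpoly_diagonal]

lemma conj_pow (U V D : Matrix n n ℝ) (hUV : U * V = 1) (hVU : V * U = 1) (m : ℕ) :
    (U * D * V) ^ m = U * D ^ m * V := by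
  induction m with
  | zero => rw [pow_zero, pow_zero, mul_one, hUV]
  | succ m ih =>
      rw [pow_succ, ih, pow_succ]
      calc U * D ^ m * V * (U * D * V) = U * D ^ m * (V * U) * D * V := by noncomm_ring
        _ = U * (D ^ m * D) * V := by rw [hVU, mul_one]; noncomm_ring

lemma pow_spectral (hA : A.IsHermitian) (m : ℕ) :
    A ^ m = (hA.eigenvectorUnitary : Matrix n n ℝ) * Matrix.diagonal (fun i => hA.eigenvalues i ^ m)
      * star (hA.eigenvectorUnitary : Matrix n n ℝ) := by
  have h1 : star (hA.eigenvectorUnitary : Matrix n n ℝ)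
      * (hA.eigenvectorUnitary : Matrix n n ℝ) = 1 :=
    Matrix.mem_unitaryGroup_iff'.mp hA.eigenvectorUnitary.2
  have h2 : (hA.eigenvectorUnitary : Matrix n n ℝ)
      * star (hA.eigenvectorUnitary : Matrix n n ℝ) = 1 :=
    Matrix.mem_unitaryGroup_iff.mp hA.eigenvectorUnitary.2
  have := congrArg (fun B : Matrix n n ℝ => B ^ m) (real_spectral hA)
  rw [this, conj_pow _ _ _ h2 h1, Matrix.diagonal_pow]
  rfl

lemma trace_pow (hA : A.IsHermitian) (m : ℕ) :
    (A ^ m).trace = ∑ i, hA.eigenvalues i ^ m := by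
  rw [pow_spectral hA m, Matrix.trace_mul_comm, ← mul_assoc]
  rw [Matrix.mem_unitaryGroup_iff'.mp hA.eigenvectorUnitary.2, one_mul, Matrix.trace_diagonal]

lemma roots_charpoly (hA : A.IsHermitian) :
    A.charpoly.roots = Finset.univ.val.map hA.eigenvalues := by
  rw [charpoly_eq_prod hA]
  have hmm : (Finset.univ.val.map (fun i => X - C (hA.eigenvalues i)))
      = ((Finset.univ.val.map hA.eigenvalues).map (fun a : ℝ => X - C a)) := by
    rw [Multiset.map_map]
    rfl
  rw [Finset.prod_eq_multiset_prod, hmm]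
  exact Polynomial.roots_multiset_prod_X_sub_C _

lemma splits_charpoly (hA : A.IsHermitian) : A.charpoly.Splits := by
  rw [Polynomial.splits_iff_card_roots, roots_charpoly hA]
  simp [Matrix.charpoly_natDegree_eq_dim]


lemma comp_charpoly (M : Matrix n n ℝ) :
    M.charpoly.comp (-X) = C ((-1:ℝ)^(Fintype.card n)) * (-M).charpoly := by
  have h1 : M.charpoly.comp (-X)
      = (Polynomial.eval₂RingHom (C : ℝ →+* ℝ[X]) (-X)) (charmatrix M).det := rfl
  rw [h1, RingHom.map_det, RingHom.mapMatrix_apply]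
  have h2 : (charmatrix M).map ⇑(Polynomial.eval₂RingHom (C : ℝ →+* ℝ[X]) (-X))
      = - charmatrix (-M) := by
    ext i j
    rw [Matrix.map_apply]
    by_cases h : i = j
    · subst h
      rw [charmatrix_apply_eq, Matrix.neg_apply, charmatrix_apply_eq, Matrix.neg_apply]
      simp
      ring
    · rw [charmatrix_apply_ne _ _ _ h, Matrix.neg_apply, charmatrix_apply_ne _ _ _ h,
        Matrix.neg_apply]
      simp
  rw [h2, Matrix.det_neg, Matrix.charpoly]
  congr 1
  rw [map_pow, map_neg, Polynomial.C_1]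

lemma sum_pow_eigen_eq_zero {A : Matrix n n ℝ} (hA : A.IsHermitian)
    (h : ∀ μ : ℝ, A.charpoly.rootMultiplicity μ = A.charpoly.rootMultiplicity (-μ))
    (m : ℕ) (hm : Odd m) : (A ^ m).trace = 0 := by
  rw [trace_pow hA]
  have hne := roots_map_neg_eq A.charpoly (A.charpoly_monic.ne_zero) h
  have hsum : ∑ i, hA.eigenvalues i ^ m = ((A.charpoly.roots).map (fun a => a ^ m)).sum := by
    rw [roots_charpoly hA, Multiset.map_map, Finset.sum_eq_multiset_sum]
    rfl
  rw [hsum]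
  have h1 : ((A.charpoly.roots).map (fun a => a ^ m)).sum
      = ((A.charpoly.roots.map (fun a => -a)).map (fun a => a ^ m)).sum := by rw [hne]
  rw [Multiset.map_map] at h1
  have h2 : ((fun a : ℝ => a ^ m) ∘ fun a : ℝ => -a) = fun a : ℝ => -(a ^ m) := by
    funext a
    simp [hm.neg_pow]
  rw [h2] at h1
  have h3 : (A.charpoly.roots.map fun a : ℝ => -(a ^ m)).sum
      = - (A.charpoly.roots.map fun a : ℝ => a ^ m).sum := by
    have h4 : A.charpoly.roots.map (fun a : ℝ => -(a ^ m))
        = (A.charpoly.roots.map (fun a : ℝ => a ^ m)).map Neg.neg := by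
      rw [Multiset.map_map]
      rfl
    rw [h4, Multiset.sum_map_neg']
  rw [h3] at h1
  linarith

end MatrixPart

end OddCycAux
section Comb
variable {V : Type} [Fintype V] [DecidableEq V]

namespace OddCycAux

lemma adj_symm {H : FinHypergraph V} {S T : Finset V} (h : Adj H S T) : Adj H T S :=
  ⟨h.2.1, h.1, h.2.2.1.symm, by rw [Finset.union_comm]; exact h.2.2.2⟩

lemma adj_irrefl {H : FinHypergraph V} {S : Finset V} (h : Adj H S S) : False := by
  obtain ⟨hne, -, hdisj, -⟩ := h
  exact hne.ne_empty (disjoint_self.mp hdisj)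

lemma adj_ne {H : FinHypergraph V} {S T : Finset V} (h : Adj H S T) : S ≠ T := by
  rintro rfl
  exact adj_irrefl h

lemma union_cancel {H : FinHypergraph V} {S T R : Finset V} (h1 : Adj H S T) (h2 : Adj H T R)
    (h : S ∪ T = T ∪ R) : S = R := by
  have e1 : S = (S ∪ T) \ T := by
    rw [Finset.union_comm, Finset.union_sdiff_cancel_left h1.2.2.1.symm]
  rw [e1, h, Finset.union_sdiff_cancel_left h2.2.2.1]

lemma mem_IH_of_adj {H : FinHypergraph V} {S T : Finset V} (h : Adj H S T) : S ∈ IH H := by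
  rw [IH, Finset.mem_filter]
  refine ⟨Finset.mem_univ _, Or.inl ⟨h.1, S ∪ T, h.2.2.2, ?_⟩⟩
  rw [Finset.ssubset_iff_of_subset Finset.subset_union_left]
  obtain ⟨x, hx⟩ := h.2.1
  exact ⟨x, Finset.mem_union_right _ hx, fun hxS => (Finset.disjoint_left.mp h.2.2.1) hxS hx⟩

/-- The list-packaging lemma: an injective closed odd chain gives an odd exact cycle. -/
lemma exists_cycle_of_fn {H : FinHypergraph V} (f : ℕ → Finset V) (n : ℕ) (hodd : Odd n)
    (h3 : 3 ≤ n) (hcl : f n = f 0) (hchain : ∀ i < n, Adj H (f i) (f (i+1)))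
    (hinj : ∀ i j, i < j → j < n → f i ≠ f j) : HasOddExactCycle H := by
  classical
  set l : List (Finset V) := (List.range (n+1)).map f with hl
  have hlen : l.length = n + 1 := by simp [hl]
  have hgetE : ∀ i, ∀ (h : i < l.length), l[i]'h = f i := by
    intro i h
    simp [hl]
  have hget : ∀ i, i < n + 1 → l[i]? = some (f i) := by
    intro i hi
    rw [List.getElem?_eq_getElem (by omega), hgetE i (by omega)]
  refine ⟨l, ?_, ?_, ?_, ?_, ?_, ?_⟩
  · omega
  · rw [List.head?_eq_getElem?, List.getLast?_eq_getElem?, hlen]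
    rw [hget 0 (by omega), Nat.add_sub_cancel, hget n (by omega), hcl]
  · have hdl : l.dropLast = (List.range n).map f := by
      rw [hl, ← List.map_dropLast]
      congr 1
      rw [List.range_succ, List.dropLast_concat]
    rw [hdl]
    refine List.Nodup.map_on ?_ List.nodup_range
    intro i hi j hj hfe
    rw [List.mem_range] at hi hj
    rcases lt_trichotomy i j with h | h | h
    · exact absurd hfe (hinj i j h hj)
    · exact h
    · exact absurd hfe.symm (hinj j i h hi)
  · rw [hl]; show List.IsChain _ _; rw [List.isChain_map, List.isChain_range_succ]
    exact hchain
  · -- 3 ≤ number of distinct unions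
    set u : ℕ → Finset V := fun i => f i ∪ f (i+1) with hu
    set us := ((l.zip l.tail).map (fun p => p.1 ∪ p.2)) with hus
    have hzl : (l.zip l.tail).length = n := by
      simp [hl, List.length_zip]
    have humem : ∀ i, i < n → u i ∈ us := by
      intro i hi
      have h1 : (l.zip l.tail)[i]'(by omega) = (l[i]'(by omega), l.tail[i]'(by simp [hlen]; omega)) :=
        List.getElem_zip
      have h2 : l[i]'(by omega) = f i := hgetE i (by omega)
      have h3' : l.tail[i]'(by simp [hlen]; omega) = f (i+1) := by
        rw [List.getElem_tail]
        exact hgetE (i+1) (by omega)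
      rw [hus]
      refine List.mem_map.mpr ⟨(f i, f (i+1)), ?_, rfl⟩
      rw [← h2, ← h3', ← h1]
      exact List.getElem_mem _
    -- consecutive unions are distinct
    have hconsec : ∀ i, i + 1 < n → u i ≠ u (i+1) := by
      intro i hi he
      have hadj1 : Adj H (f i) (f (i+1)) := hchain i (by omega)
      have hadj2 : Adj H (f (i+1)) (f (i+2)) := hchain (i+1) (by omega)
      have : f i = f (i+2) := union_cancel hadj1 hadj2 he
      by_cases hcase : i + 2 < n
      · exact hinj i (i+2) (by omega) hcase this
      · have h2n : i + 2 = n := by omega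
        rw [h2n, hcl] at this
        exact hinj 0 i (by omega) (by omega) this.symm
    have hcyc : u (n-1) ≠ u 0 := by
      intro he
      have hadj1 : Adj H (f (n-1)) (f 0) := by
        have := hchain (n-1) (by omega)
        rwa [show n - 1 + 1 = n by omega, hcl] at this
      have hadj2 : Adj H (f 0) (f 1) := hchain 0 (by omega)
      have he' : f (n-1) ∪ f 0 = f 0 ∪ f 1 := by
        have : u (n-1) = f (n-1) ∪ f 0 := by
          rw [hu]
          simp only
          rw [show n - 1 + 1 = n by omega, hcl]
        rw [← this, he, hu]
      have : f (n-1) = f 1 := union_cancel hadj1 hadj2 he'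
      exact hinj 1 (n-1) (by omega) (by omega) this.symm
    by_contra hlt
    push_neg at hlt
    have h01 : u 0 ≠ u 1 := hconsec 0 (by omega)
    have hsub : ({u 0, u 1} : Finset (Finset V)) ⊆ us.toFinset := by
      intro x hx
      rw [Finset.mem_insert, Finset.mem_singleton] at hx
      rcases hx with rfl | rfl
      · exact List.mem_toFinset.mpr (humem 0 (by omega))
      · exact List.mem_toFinset.mpr (humem 1 (by omega))
    have hcard2 : ({u 0, u 1} : Finset (Finset V)).card = 2 := by
      rw [Finset.card_insert_of_notMem (by simpa using h01), Finset.card_singleton]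
    have heq : us.toFinset = {u 0, u 1} :=
      (Finset.eq_of_subset_of_card_le hsub (by omega)).symm
    have hverts : ∀ i, i < n → u i = u 0 ∨ u i = u 1 := by
      intro i hi
      have : u i ∈ us.toFinset := List.mem_toFinset.mpr (humem i hi)
      rw [heq, Finset.mem_insert, Finset.mem_singleton] at this
      exact this
    have halt : ∀ i, i < n → u i = if Even i then u 0 else u 1 := by
      intro i
      induction i with
      | zero => intro _; simp
      | succ i ih =>
          intro hi
          have hui := ih (by omega)
          have hne := hconsec i hi
          by_cases hev : Even i
          · have hne0 : u (i+1) ≠ u 0 := by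
              rw [hui, if_pos hev] at hne
              exact fun hh => hne hh.symm
            have h1 : u (i+1) = u 1 := (hverts (i+1) hi).resolve_left hne0
            rw [h1, if_neg (by simp [Nat.even_add_one, hev])]
          · have hne1 : u (i+1) ≠ u 1 := by
              rw [hui, if_neg hev] at hne
              exact fun hh => hne hh.symm
            have h1 : u (i+1) = u 0 := (hverts (i+1) hi).resolve_right hne1
            rw [h1, if_pos (by simp [Nat.even_add_one, hev])]
    have hlast := halt (n-1) (by omega)
    have hevlast : Even (n-1) := by
      obtain ⟨c, hc⟩ := hodd
      exact ⟨c, by omega⟩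
    rw [if_pos hevlast] at hlast
    exact hcyc hlast
  · rw [hlen]
    simpa using hodd

/-- Extraction: any closed odd chain yields an odd exact cycle. -/
lemma cycle_of_closed_walk {H : FinHypergraph V} : ∀ n : ℕ, Odd n → ∀ f : ℕ → Finset V,
    f n = f 0 → (∀ i < n, Adj H (f i) (f (i+1))) → HasOddExactCycle H := by
  intro n
  induction n using Nat.strong_induction_on with
  | _ n ih =>
    intro hodd f hcl hchain
    by_cases hinj : ∀ i j, i < j → j < n → f i ≠ f j
    · have hn1 : n ≠ 1 := by
        rintro rfl
        have h01 := hchain 0 (by omega)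
        rw [Nat.zero_add, hcl] at h01
        exact adj_irrefl h01
      have h3 : 3 ≤ n := by
        obtain ⟨c, hc⟩ := hodd
        rcases Nat.eq_or_lt_of_le (show 0 ≤ c by omega) with h | h <;> omega
      exact exists_cycle_of_fn f n hodd h3 hcl hchain hinj
    · push_neg at hinj
      obtain ⟨i, j, hij, hjn, hfe⟩ := hinj
      set L1 := j - i with hL1
      set L2 := n - j + i with hL2
      have hsum : L1 + L2 = n := by omega
      rcases Nat.even_or_odd L1 with hev | hod
      · -- L2 is odd; use the outer walk
        have hoddL2 : Odd L2 := by
          obtain ⟨c, hc⟩ := hodd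
          obtain ⟨d, hd⟩ := hev
          exact ⟨c - d, by omega⟩
        set g : ℕ → Finset V := fun t => if j + t ≤ n then f (j + t) else f (j + t - n) with hg
        refine ih L2 (by omega) hoddL2 g ?_ ?_
        · by_cases hi0 : i = 0
          · have h1 : g L2 = f n := by
              rw [hg]
              simp only
              rw [if_pos (by omega), show j + L2 = n by omega]
            have h2 : g 0 = f j := by rw [hg]; simp only; rw [if_pos (by omega), Nat.add_zero]
            rw [h1, h2, hcl, ← hfe, hi0]
          · have h1 : g L2 = f i := by
              rw [hg]
              simp only
              rw [if_neg (by omega), show j + L2 - n = i by omega]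
            have h2 : g 0 = f j := by rw [hg]; simp only; rw [if_pos (by omega), Nat.add_zero]
            rw [h1, h2, hfe]
        · intro t ht
          by_cases hc1 : j + t + 1 ≤ n
          · have h1 : g t = f (j + t) := by rw [hg]; simp only; rw [if_pos (by omega)]
            have h2 : g (t+1) = f (j + t + 1) := by
              rw [hg]; simp only; rw [if_pos (by omega), ← Nat.add_assoc]
            rw [h1, h2]
            exact hchain (j + t) (by omega)
          · by_cases hc2 : j + t = n
            · have h1 : g t = f 0 := by
                rw [hg]; simp only; rw [if_pos (by omega), hc2, hcl]
              have h2 : g (t+1) = f 1 := by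
                rw [hg]; simp only; rw [if_neg (by omega), show j + (t + 1) - n = 1 by omega]
              rw [h1, h2]
              exact hchain 0 (by omega)
            · have h1 : g t = f (j + t - n) := by rw [hg]; simp only; rw [if_neg (by omega)]
              have h2 : g (t+1) = f (j + t - n + 1) := by
                rw [hg]; simp only; rw [if_neg (by omega), show j + (t+1) - n = j + t - n + 1 by omega]
              rw [h1, h2]
              exact hchain (j + t - n) (by omega)
      · -- L1 odd; the inner walk
        set g : ℕ → Finset V := fun t => f (i + t) with hg
        refine ih L1 (by omega) hod g ?_ ?_
        · rw [hg]
          simp only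
          rw [Nat.add_zero, show i + L1 = j by omega, hfe]
        · intro t ht
          rw [hg]
          simp only
          rw [← Nat.add_assoc]
          exact hchain (i + t) (by omega)


/-- The associated simple graph on `I(H)`. -/
def G (H : FinHypergraph V) : SimpleGraph ↥(IH H) where
  Adj S T := Adj H S.1 T.1
  symm := ⟨fun S T h => adj_symm h⟩
  loopless := ⟨fun S h => adj_irrefl h⟩

lemma no_odd_closed {H : FinHypergraph V} (hno : ¬ HasOddExactCycle H) (n : ℕ) (f : ℕ → Finset V)
    (hodd : Odd n) (hcl : f n = f 0) (hchain : ∀ i < n, Adj H (f i) (f (i+1))) : False :=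
  hno (cycle_of_closed_walk n hodd f hcl hchain)

lemma no_odd_closed_walk {H : FinHypergraph V} {a : ↥(IH H)} (hno : ¬ HasOddExactCycle H)
    (w : (G H).Walk a a) (hodd : Odd w.length) : False := by
  classical
  set l : List (Finset V) := w.support.map Subtype.val with hl
  set n := w.length with hn
  have hlen : l.length = n + 1 := by
    rw [hl, List.length_map, SimpleGraph.Walk.length_support]
  set f : ℕ → Finset V := fun i => l.getD i ∅ with hf
  have hne : l ≠ [] := by
    intro h
    rw [h] at hlen
    simp at hlen
  apply no_odd_closed hno n f hodd
  · have h0 : f 0 = a.1 := by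
      show l.getD 0 ∅ = a.1
      rw [List.getD_eq_getElem _ _ (by omega)]
      simp only [hl, List.getElem_map]
      congr 1
      rw [← List.head_eq_getElem]
      exact SimpleGraph.Walk.head_support w
    have h1 : f n = a.1 := by
      show l.getD n ∅ = a.1
      have h2 : l.getLast? = some (a : Finset V) := by
        rw [hl, List.getLast?_map]
        rw [List.getLast?_eq_getLast (by simp), Option.map_some]
        rw [SimpleGraph.Walk.getLast_support]
      rw [List.getD_eq_getElem _ _ (by omega)]
      have h3 : l.getLast? = some (l[n]'(by omega)) := by
        rw [List.getLast?_eq_getElem?]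
        rw [show l.length - 1 = n by omega]
        rw [List.getElem?_eq_getElem (by omega)]
      rw [h3] at h2
      exact Option.some.inj h2
    rw [h0, h1]
  · intro i hi
    have hchain' : l.Chain' (Adj H) := by
      rw [hl]; show List.IsChain _ _; rw [List.isChain_map]
      exact SimpleGraph.Walk.isChain_adj_support w
    have := List.isChain_iff_getElem.mp hchain' i (by omega)
    rw [hf]
    simp only
    rw [List.getD_eq_getElem _ _ (by omega), List.getD_eq_getElem _ _ (by omega)]
    convert this using 2 <;> simp [List.get]

lemma exists_coloring {H : FinHypergraph V} (hno : ¬ HasOddExactCycle H) :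
    ∃ c : ↥(IH H) → Bool, ∀ i j : ↥(IH H), Adj H i.1 j.1 → c i ≠ c j := by
  classical
  have hrep : ∀ v : ↥(IH H), (G H).Reachable ((G H).connectedComponentMk v).out v := by
    intro v
    have h := Quot.out_eq ((G H).connectedComponentMk v)
    exact SimpleGraph.ConnectedComponent.eq.mp h
  have hwalk : ∀ v : ↥(IH H), Nonempty ((G H).Walk ((G H).connectedComponentMk v).out v) :=
    fun v => hrep v
  set P : ∀ v : ↥(IH H), (G H).Walk ((G H).connectedComponentMk v).out v :=
    fun v => Classical.choice (hwalk v) with hP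
  refine ⟨fun v => decide (Odd (P v).length), ?_⟩
  intro i j hadj hc
  simp only [decide_eq_decide] at hc
  have hGadj : (G H).Adj i j := hadj
  have hcomp : (G H).connectedComponentMk i = (G H).connectedComponentMk j :=
    SimpleGraph.ConnectedComponent.eq.mpr hGadj.reachable
  have hrj : ((G H).connectedComponentMk j).out = ((G H).connectedComponentMk i).out := by
    rw [hcomp]
  set q : (G H).Walk ((G H).connectedComponentMk i).out j := (P j).copy hrj rfl with hq
  set w : (G H).Walk ((G H).connectedComponentMk i).out ((G H).connectedComponentMk i).out :=
    (P i).append (SimpleGraph.Walk.cons hGadj q.reverse) with hw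
  have hwl : w.length = (P i).length + (q.length + 1) := by
    rw [hw, SimpleGraph.Walk.length_append, SimpleGraph.Walk.length_cons,
      SimpleGraph.Walk.length_reverse]
  have hql : q.length = (P j).length := by rw [hq, SimpleGraph.Walk.length_copy]
  apply no_odd_closed_walk hno w
  rw [hwl, hql]
  simp only [Nat.odd_iff] at hc ⊢
  by_cases h1 : (P i).length % 2 = 1
  · have h2 := hc.mp h1
    omega
  · have h2 : ¬ (P j).length % 2 = 1 := fun hh => h1 (hc.mpr hh)
    omega

section Umatrix

variable {H : FinHypergraph V}

lemma IH_nonempty {S : Finset V} (hS : S ∈ IH H) : S.Nonempty := by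
  rw [IH, Finset.mem_filter] at hS
  rcases hS.2 with ⟨h, -⟩ | ⟨v, -, rfl⟩
  · exact h
  · exact Finset.singleton_nonempty v

lemma U_apply_symm (i j : ↥(IH H)) : U H i j = U H j i := by
  unfold U
  by_cases h : (i : Finset V) = j
  · rw [if_pos h, if_pos h.symm, h]
  · rw [if_neg h, if_neg (show ¬(j:Finset V) = i from fun hh => h hh.symm)]
    by_cases hd : Disjoint (i : Finset V) (j : Finset V)
    · rw [if_pos hd, if_pos hd.symm, Finset.union_comm]
    · rw [if_neg hd, if_neg (show ¬ Disjoint (j:Finset V) (i:Finset V) from fun hh => hd hh.symm)]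

lemma U_isHermitian : (U H).IsHermitian := by
  ext i j
  rw [Matrix.conjTranspose_apply, star_trivial]
  exact U_apply_symm j i

lemma U_nonneg (i j : ↥(IH H)) : 0 ≤ U H i j := by
  unfold U
  split_ifs <;> positivity

lemma U_diag (hs : Simple H) (i : ↥(IH H)) : U H i i = 0 := by
  unfold U
  rw [if_pos rfl]
  by_cases h : (i : Finset V).card = 1
  · rw [if_pos h]
    have : (i : Finset V) ∉ H.edges := by
      intro hmem
      have := hs.2 _ hmem
      omega
    rw [Multiset.count_eq_zero.mpr this, Nat.cast_zero]
  · rw [if_neg h]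

lemma adj_of_U_ne_zero (hs : Simple H) {i j : ↥(IH H)} (h : U H i j ≠ 0) :
    Adj H i.1 j.1 := by
  by_cases hij : (i : Finset V) = j
  · exact absurd (by rw [Subtype.ext hij]; exact U_diag hs j) h
  · unfold U at h
    rw [if_neg hij] at h
    by_cases hd : Disjoint (i : Finset V) (j : Finset V)
    · rw [if_pos hd] at h
      have hmem : (i : Finset V) ∪ j ∈ H.edges := by
        rw [← Multiset.count_ne_zero]
        exact fun hh => h (by rw [hh, Nat.cast_zero])
      exact ⟨IH_nonempty i.2, IH_nonempty j.2, hd, hmem⟩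
    · rw [if_neg hd] at h
      exact absurd rfl h

lemma one_le_U_of_adj {i j : ↥(IH H)} (h : Adj H i.1 j.1) : 1 ≤ U H i j := by
  unfold U
  rw [if_neg (adj_ne h), if_pos h.2.2.1]
  rw [show (1:ℝ) = ((1:ℕ):ℝ) by norm_num]
  rw [Nat.cast_le]
  exact Multiset.one_le_count_iff_mem.mpr h.2.2.2

lemma pow_entry_nonneg (m : ℕ) (i j : ↥(IH H)) : 0 ≤ ((U H)^m) i j := by
  induction m generalizing i j with
  | zero =>
      rw [pow_zero]
      by_cases h : i = j
      · rw [h, Matrix.one_apply_eq]; norm_num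
      · rw [Matrix.one_apply_ne h]
  | succ m ih =>
      rw [pow_succ, Matrix.mul_apply]
      exact Finset.sum_nonneg fun t _ => mul_nonneg (ih i t) (U_nonneg t j)

lemma one_le_pow_entry (g : ℕ → ↥(IH H)) (m : ℕ)
    (hchain : ∀ i < m, Adj H (g i).1 (g (i+1)).1) :
    1 ≤ ((U H)^m) (g 0) (g m) := by
  induction m with
  | zero => rw [pow_zero, Matrix.one_apply_eq]
  | succ m ih =>
      rw [pow_succ, Matrix.mul_apply]
      have h1 : 1 ≤ ((U H)^m) (g 0) (g m) := ih (fun i hi => hchain i (by omega))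
      have h2 : 1 ≤ U H (g m) (g (m+1)) := one_le_U_of_adj (hchain m (by omega))
      calc (1:ℝ) = 1 * 1 := by ring
      _ ≤ ((U H)^m) (g 0) (g m) * U H (g m) (g (m+1)) :=
          mul_le_mul h1 h2 (by norm_num) (by linarith)
      _ ≤ ∑ t, ((U H)^m) (g 0) t * U H t (g (m+1)) :=
          Finset.single_le_sum
            (fun t _ => mul_nonneg (pow_entry_nonneg m (g 0) t) (U_nonneg t (g (m+1))))
            (Finset.mem_univ (g m))

end Umatrix

end OddCycAux
end Comb

open Polynomial in
theorem no_odd_exact_cycle_tfae (H : FinHypergraph V) (hs : Simple H) :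
    ((¬ HasOddExactCycle H) ↔
      (∀ r : ℕ, 2*r+1 ≤ Fintype.card ↥(IH H) →
        ((U H).charpoly).coeff (Fintype.card ↥(IH H) - (2*r+1)) = 0)) ∧
    ((∀ r : ℕ, 2*r+1 ≤ Fintype.card ↥(IH H) →
        ((U H).charpoly).coeff (Fintype.card ↥(IH H) - (2*r+1)) = 0) ↔
      (∀ μ : ℝ, ((U H).charpoly).rootMultiplicity μ =
        ((U H).charpoly).rootMultiplicity (-μ))) := by
  classical
  have hherm : (U H).IsHermitian := OddCycAux.U_isHermitian
  have hmono : (U H).charpoly.Monic := (U H).charpoly_monic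
  have hp0 : (U H).charpoly ≠ 0 := hmono.ne_zero
  have hdeg : (U H).charpoly.natDegree = Fintype.card ↥(IH H) :=
    Matrix.charpoly_natDegree_eq_dim (U H)
  have hsp : (U H).charpoly.Splits := OddCycAux.splits_charpoly hherm
  -- (i) implies the comp identity
  have hiK : ¬ HasOddExactCycle H →
      (U H).charpoly.comp (-X) = C ((-1:ℝ)^(Fintype.card ↥(IH H))) * (U H).charpoly := by
    intro hno
    obtain ⟨c, hc⟩ := OddCycAux.exists_coloring hno
    set D : Matrix ↥(IH H) ↥(IH H) ℝ :=
      Matrix.diagonal (fun v => if c v then 1 else -1) with hD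
    have hDD : D * D = 1 := by
      ext i j
      rw [hD, Matrix.diagonal_mul_diagonal]
      by_cases hij : i = j
      · subst hij
        rw [Matrix.diagonal_apply_eq, Matrix.one_apply_eq]
        by_cases hcv : c i <;> simp [hcv, Pi.mul_apply]
      · rw [Matrix.diagonal_apply_ne _ hij, Matrix.one_apply_ne hij]
    have hDAD : D * (U H) * D = -(U H) := by
      ext i j
      have he : (D * (U H) * D) i j
          = (if c i then (1:ℝ) else -1) * ((U H) i j) * (if c j then (1:ℝ) else -1) := by
        rw [hD, Matrix.mul_diagonal, Matrix.diagonal_mul]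
      rw [he, Matrix.neg_apply]
      by_cases hz : (U H) i j = 0
      · rw [hz]
        ring
      · have hadj := OddCycAux.adj_of_U_ne_zero hs hz
        have hcc := hc i j hadj
        have hdd : (if c i then (1:ℝ) else -1) * (if c j then 1 else -1) = -1 := by
          cases hci : c i <;> cases hcj : c j <;> simp_all
        calc (if c i then (1:ℝ) else -1) * ((U H) i j) * (if c j then (1:ℝ) else -1)
            = ((if c i then (1:ℝ) else -1) * (if c j then 1 else -1)) * (U H) i j := by ring
        _ = -(U H) i j := by rw [hdd]; ring
    have hneg : (-(U H)).charpoly = (U H).charpoly := by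
      rw [← hDAD, OddCycAux.charpoly_conj' (U H) D D hDD]
    have hcomp := OddCycAux.comp_charpoly (U H)
    rw [hneg] at hcomp
    exact hcomp
  -- the comp identity iff the coefficient condition
  have hK_ii := OddCycAux.coeff_cond_iff (U H).charpoly (Fintype.card ↥(IH H)) hdeg
  -- comp identity implies root symmetry
  have hii_iii : (U H).charpoly.comp (-X) = C ((-1:ℝ)^(Fintype.card ↥(IH H))) * (U H).charpoly →
      ∀ μ : ℝ, ((U H).charpoly).rootMultiplicity μ = ((U H).charpoly).rootMultiplicity (-μ) :=
    fun h μ => OddCycAux.rm_of_comp _ hp0 _ h μ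
  have hiii_K : (∀ μ : ℝ, ((U H).charpoly).rootMultiplicity μ =
      ((U H).charpoly).rootMultiplicity (-μ)) →
      (U H).charpoly.comp (-X) = C ((-1:ℝ)^(Fintype.card ↥(IH H))) * (U H).charpoly :=
    fun h => OddCycAux.comp_of_rm _ hmono _ hdeg hsp h
  -- root symmetry implies no odd exact cycle
  have hiii_i : (∀ μ : ℝ, ((U H).charpoly).rootMultiplicity μ =
      ((U H).charpoly).rootMultiplicity (-μ)) → ¬ HasOddExactCycle H := by
    intro hμ hcyc
    obtain ⟨l, hlen2, hhg, hnodup, hchain, hcard3, hodd⟩ := hcyc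
    set n := l.length - 1 with hn
    set f : ℕ → Finset V := fun t => l.getD t ∅ with hf
    have hn1 : 1 ≤ n := by
      obtain ⟨c, hc⟩ := hodd
      omega
    have hnlen : n < l.length := by omega
    have hl0 : 0 < l.length := by omega
    have hcl : f n = f 0 := by
      have h0 : l.head? = some (l[0]'hl0) := by
        rw [List.head?_eq_getElem?, List.getElem?_eq_getElem hl0]
      have h1 : l.getLast? = some (l[n]'hnlen) := by
        rw [List.getLast?_eq_getElem?, ← hn, List.getElem?_eq_getElem hnlen]
      rw [h0, h1] at hhg
      have h2 := Option.some.inj hhg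
      show l.getD n ∅ = l.getD 0 ∅
      rw [List.getD_eq_getElem _ _ hnlen, List.getD_eq_getElem _ _ hl0]
      exact h2.symm
    have hch : ∀ i < n, Adj H (f i) (f (i+1)) := by
      intro i hi
      have hcg := List.isChain_iff_getElem.mp hchain i (by omega)
      show Adj H (l.getD i ∅) (l.getD (i+1) ∅)
      rw [List.getD_eq_getElem _ _ (by omega), List.getD_eq_getElem _ _ (by omega)]
      exact hcg
    have hmemIH : ∀ i, i ≤ n → f i ∈ IH H := by
      intro i hi
      rcases Nat.lt_or_ge i n with h | h
      · exact OddCycAux.mem_IH_of_adj (hch i h)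
      · have hin : i = n := by omega
        rw [hin, hcl]
        exact OddCycAux.mem_IH_of_adj (hch 0 (by omega))
    set g : ℕ → ↥(IH H) := fun i =>
      if h : i ≤ n then ⟨f i, hmemIH i h⟩ else ⟨f 0, hmemIH 0 (Nat.zero_le n)⟩ with hg
    have hgval : ∀ i (h : i ≤ n), (g i) = (⟨f i, hmemIH i h⟩ : ↥(IH H)) := by
      intro i h
      rw [hg]
      simp only
      rw [dif_pos h]
    have hgch : ∀ i < n, Adj H (g i).1 (g (i+1)).1 := by
      intro i hi
      rw [hgval i (by omega), hgval (i+1) (by omega)]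
      exact hch i hi
    have h1 : 1 ≤ ((U H)^n) (g 0) (g n) := OddCycAux.one_le_pow_entry g n hgch
    have hgn : g n = g 0 := by
      rw [hgval n le_rfl, hgval 0 (Nat.zero_le n)]
      exact Subtype.ext hcl
    rw [hgn] at h1
    have htr : (1:ℝ) ≤ ((U H)^n).trace := by
      have hsum : ((U H)^n).trace = ∑ i, ((U H)^n) i i := rfl
      rw [hsum]
      calc (1:ℝ) ≤ ((U H)^n) (g 0) (g 0) := h1
      _ ≤ ∑ i, ((U H)^n) i i :=
        Finset.single_le_sum (fun t _ => OddCycAux.pow_entry_nonneg n t t) (Finset.mem_univ _)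
    have hz := OddCycAux.sum_pow_eigen_eq_zero hherm hμ n hodd
    linarith
  constructor
  · constructor
    · intro h
      exact hK_ii.mpr (hiK h)
    · intro h
      exact hiii_i (hii_iii (hK_ii.mp h))
  · constructor
    · intro h
      exact hii_iii (hK_ii.mp h)
    · intro h
      exact hK_ii.mpr (hiK (hiii_i h))
end

section
/- Let H be a finite hypergraph without multiple edges, with e-index k, and let n⁻, n⁰, n⁺ be the numbers of eigenvalues of U(H) that are negative, zero, and positive respectively. Then the complete-clique number satisfies ω(H) ≤ min(n⁻ + n⁰ + 1, n⁰ + n⁺, λ₁(H)). -/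
variable {V : Type} [Fintype V] [DecidableEq V]

open Matrix

section aux
variable {n : Type} [Fintype n] [DecidableEq n] {A : Matrix n n ℝ} (hA : A.IsHermitian)

noncomputable def coords (hA : A.IsHermitian) (x : n → ℝ) : n → ℝ :=
  star (hA.eigenvectorUnitary : Matrix n n ℝ) *ᵥ x

lemma star_coe_real (M : Matrix n n ℝ) : star M = Mᵀ := by
  ext i j; simp [Matrix.star_apply]

lemma quad_eq (x : n → ℝ) :
    x ⬝ᵥ (A *ᵥ x) = ∑ i, hA.eigenvalues i * (coords hA x i) ^ 2 := by
  set Vm : Matrix n n ℝ := (hA.eigenvectorUnitary : Matrix n n ℝ) with hVm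
  conv_lhs => rw [hA.spectral_theorem, Unitary.conjStarAlgAut_apply]
  rw [← mulVec_mulVec, ← mulVec_mulVec, dotProduct_mulVec, ← mulVec_transpose,
    ← star_coe_real]
  simp only [coords, ← hVm]
  simp only [dotProduct, mulVec_diagonal, RCLike.ofReal_real_eq_id, Function.comp, id]
  refine Finset.sum_congr rfl fun i _ => by ring

end aux

section aux2
variable {n : Type} [Fintype n] [DecidableEq n] {A : Matrix n n ℝ} (hA : A.IsHermitian)

lemma mul_star_self' : (hA.eigenvectorUnitary : Matrix n n ℝ) *
    star (hA.eigenvectorUnitary : Matrix n n ℝ) = 1 :=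
  (Matrix.mem_unitaryGroup_iff).mp (hA.eigenvectorUnitary).2

lemma norm_eq (x : n → ℝ) : ∑ i, (coords hA x i) ^ 2 = ∑ i, (x i) ^ 2 := by
  set Vm : Matrix n n ℝ := (hA.eigenvectorUnitary : Matrix n n ℝ) with hVm
  have h1 : ∑ i, (coords hA x i) ^ 2 = coords hA x ⬝ᵥ coords hA x := by
    simp [dotProduct, sq]
  have h2 : ∑ i, (x i) ^ 2 = x ⬝ᵥ x := by simp [dotProduct, sq]
  rw [h1, h2]
  show (star Vm *ᵥ x) ⬝ᵥ (star Vm *ᵥ x) = x ⬝ᵥ x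
  rw [dotProduct_mulVec, ← mulVec_transpose, star_coe_real, transpose_transpose,
    mulVec_mulVec, ← star_coe_real, mul_star_self' hA, one_mulVec]

lemma coords_eq_zero (x : n → ℝ) (h : coords hA x = 0) : x = 0 := by
  have : (hA.eigenvectorUnitary : Matrix n n ℝ) *ᵥ coords hA x = x := by
    show _ *ᵥ (star _ *ᵥ x) = x
    rw [mulVec_mulVec, mul_star_self' hA, one_mulVec]
  rw [h, mulVec_zero] at this
  exact this.symm

end aux2

lemma card_le_of_inj {α β : Type} [Fintype α] [Fintype β]
    (f : (α → ℝ) →ₗ[ℝ] (β → ℝ)) (hf : Function.Injective f) :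
    Fintype.card α ≤ Fintype.card β := by
  have := LinearMap.finrank_le_finrank_of_injective hf
  simpa [Module.finrank_fintype_fun_eq_card] using this

lemma card_le_of_inj' {α β : Type} [Fintype α] [Fintype β]
    (f : (α → ℝ) →ₗ[ℝ] ℝ × (β → ℝ)) (hf : Function.Injective f) :
    Fintype.card α ≤ 1 + Fintype.card β := by
  have := LinearMap.finrank_le_finrank_of_injective hf
  simpa [Module.finrank_fintype_fun_eq_card, Module.finrank_prod] using this

noncomputable def sumLM (α : Type) [Fintype α] : (α → ℝ) →ₗ[ℝ] ℝ where
  toFun x := ∑ v, x v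
  map_add' x y := by simp [Finset.sum_add_distrib]
  map_smul' r x := by simp [Finset.mul_sum]

lemma dot_shift {m n : Type} [Fintype m] [Fintype n] (M : Matrix m n ℝ)
    (x : n → ℝ) (y : m → ℝ) : (M *ᵥ x) ⬝ᵥ y = x ⬝ᵥ (Mᵀ *ᵥ y) := by
  rw [dotProduct_comm, dotProduct_mulVec, ← mulVec_transpose, dotProduct_comm]


set_option maxHeartbeats 1000000 in
theorem complete_clique_bound (H : FinHypergraph V) (hd : H.edges.Nodup)
    (hU : (U H).IsHermitian)
    (i₀ : ↥(IH H)) (hmax : ∀ i, hU.eigenvalues i ≤ hU.eigenvalues i₀)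
    (W : Finset V) (hW : W ⊆ H.verts)
    (hclique : ∀ s ⊆ W, s.Nonempty → s ∈ H.edges) :
    W.card ≤ (Finset.univ.filter (fun i : ↥(IH H) => hU.eigenvalues i < 0)).card +
             (Finset.univ.filter (fun i : ↥(IH H) => hU.eigenvalues i = 0)).card + 1 ∧
    W.card ≤ (Finset.univ.filter (fun i : ↥(IH H) => hU.eigenvalues i = 0)).card +
             (Finset.univ.filter (fun i : ↥(IH H) => 0 < hU.eigenvalues i)).card ∧
    (W.card : ℝ) ≤ hU.eigenvalues i₀ := by
  classical
  set lam := hU.eigenvalues with hlamdef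
  -- singleton indices
  have hmem : ∀ v : ↥W, ({(v : V)} : Finset V) ∈ IH H := by
    intro v
    simp only [IH, Finset.mem_filter, Finset.mem_univ, true_and]
    exact Or.inr ⟨v, hW v.2, rfl⟩
  let sv : ↥W → ↥(IH H) := fun v => ⟨{(v : V)}, hmem v⟩
  have hsv_inj : Function.Injective sv := by
    intro v w h
    have h2 : ({(v : V)} : Finset V) = {(w : V)} := congrArg Subtype.val h
    exact Subtype.ext (Finset.singleton_injective h2)
  have hUone : ∀ v w : ↥W, U H (sv v) (sv w) = 1 := by
    intro v w
    by_cases hvw : v = w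
    · subst hvw
      have hv : ({(v : V)} : Finset V) ∈ H.edges :=
        hclique _ (Finset.singleton_subset_iff.mpr v.2) ⟨_, Finset.mem_singleton_self _⟩
      simp only [U, sv, Finset.card_singleton, if_pos rfl]
      rw [Multiset.count_eq_one_of_mem hd hv]
      simp
    · have hne : ((v : V)) ≠ (w : V) := fun h => hvw (Subtype.ext h)
      have h1 : ({(v : V)} : Finset V) ≠ {(w : V)} := fun h =>
        hne (Finset.singleton_injective h)
      have hdis : Disjoint ({(v : V)} : Finset V) {(w : V)} :=
        Finset.disjoint_singleton.mpr hne
      have hedge : ({(v : V)} ∪ {(w : V)} : Finset V) ∈ H.edges := by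
        apply hclique
        · rw [← Finset.insert_eq]
          exact Finset.insert_subset v.2 (Finset.singleton_subset_iff.mpr w.2)
        · exact ⟨(v : V), by simp⟩
      simp only [U, sv, if_neg h1, if_pos hdis]
      rw [Multiset.count_eq_one_of_mem hd hedge]
      simp
  -- the embedding matrix
  let M : Matrix ↥(IH H) ↥W ℝ := fun i v => if i = sv v then 1 else 0
  have hMtM : Mᵀ * M = 1 := by
    ext v w
    simp only [Matrix.mul_apply, Matrix.transpose_apply, Matrix.one_apply]
    simp only [M]
    by_cases hvw : v = w
    · subst hvw
      rw [Finset.sum_eq_single (sv v)] <;> simp +contextual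
    · have : sv v ≠ sv w := fun h => hvw (hsv_inj h)
      rw [if_neg hvw, Finset.sum_eq_zero]
      intro i _
      by_cases h : i = sv v
      · subst h; simp [this]
      · simp [h]
  have hMAM : Mᵀ * U H * M = Matrix.of (fun _ _ : ↥W => (1 : ℝ)) := by
    ext v w
    simp only [Matrix.mul_apply, Matrix.transpose_apply, Matrix.of_apply]
    have inner : ∀ j, ∑ i, M i v * U H i j = U H (sv v) j := by
      intro j
      simp only [M, ite_mul, one_mul, zero_mul]
      exact (Finset.sum_ite_eq' Finset.univ (sv v) (fun i => U H i j)).trans (by simp)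
    calc ∑ j, (∑ i, M i v * U H i j) * M j w
        = ∑ j, U H (sv v) j * M j w :=
          Finset.sum_congr rfl fun j _ => by rw [inner]
      _ = U H (sv v) (sv w) := by
          simp only [M, mul_ite, mul_one, mul_zero]
          exact (Finset.sum_ite_eq' Finset.univ (sv w) (fun j => U H (sv v) j)).trans (by simp)
      _ = 1 := hUone v w
  have hquad : ∀ x : ↥W → ℝ,
      (M *ᵥ x) ⬝ᵥ (U H *ᵥ (M *ᵥ x)) = (∑ v, x v) ^ 2 := by
    intro x
    rw [mulVec_mulVec, dot_shift, mulVec_mulVec, ← Matrix.mul_assoc, hMAM]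
    simp only [dotProduct, mulVec, Matrix.of_apply, one_mul]
    rw [← Finset.sum_mul, sq]
  have hnormM : ∀ x : ↥W → ℝ, (M *ᵥ x) ⬝ᵥ (M *ᵥ x) = x ⬝ᵥ x := by
    intro x
    rw [dot_shift, mulVec_mulVec, hMtM, one_mulVec]
  have hMzero : ∀ x : ↥W → ℝ, M *ᵥ x = 0 → x = 0 := by
    intro x hx
    have : (Mᵀ * M) *ᵥ x = Mᵀ *ᵥ (M *ᵥ x) := (mulVec_mulVec _ _ _).symm
    rw [hMtM, one_mulVec, hx, mulVec_zero] at this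
    exact this
  set Vm : Matrix ↥(IH H) ↥(IH H) ℝ := (hU.eigenvectorUnitary : Matrix ↥(IH H) ↥(IH H) ℝ) with hVmdef
  -- quadratic form facts for embedded vectors
  have key : ∀ x : ↥W → ℝ, (∑ i, lam i * (coords hU (M *ᵥ x) i) ^ 2 = (∑ v, x v) ^ 2)
      ∧ (∑ i, (coords hU (M *ᵥ x) i) ^ 2 = ∑ v, (x v) ^ 2) := by
    intro x
    constructor
    · rw [← quad_eq hU (M *ᵥ x), hquad x]
    · rw [norm_eq hU (M *ᵥ x)]
      have := hnormM x
      simp only [dotProduct] at this ⊢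
      calc ∑ i, (M *ᵥ x) i ^ 2 = (M *ᵥ x) ⬝ᵥ (M *ᵥ x) := by simp [dotProduct, sq]
        _ = x ⬝ᵥ x := hnormM x
        _ = ∑ v, x v ^ 2 := by simp [dotProduct, sq]
  -- nonvanishing of coords
  have hcne : ∀ x : ↥W → ℝ, x ≠ 0 → coords hU (M *ᵥ x) ≠ 0 := by
    intro x hx h
    exact hx (hMzero x (coords_eq_zero hU _ h))
  -- Part 3 : lam i₀ ≥ W.card
  have hlam0 : (0 : ℝ) ≤ lam i₀ := by
    set y0 : ↥(IH H) → ℝ := Pi.single i₀ 1 with hy0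
    have hq0 : y0 ⬝ᵥ (U H *ᵥ y0) = U H i₀ i₀ := by
      simp [y0, dotProduct, mulVec, Pi.single_apply]
    have hpos : (0 : ℝ) ≤ U H i₀ i₀ := by
      simp only [U]
      split_ifs <;> positivity
    have hn0 : ∑ i, (coords hU y0 i) ^ 2 = 1 := by
      rw [norm_eq hU y0]
      simp [y0, Pi.single_apply, sq]
    have hquad0 : ∑ i, lam i * (coords hU y0 i) ^ 2 = U H i₀ i₀ := by
      rw [← quad_eq hU y0, hq0]
    have hle : ∑ i, lam i * (coords hU y0 i) ^ 2 ≤ ∑ i, lam i₀ * (coords hU y0 i) ^ 2 :=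
      Finset.sum_le_sum fun i _ => mul_le_mul_of_nonneg_right (hmax i) (sq_nonneg _)
    rw [hquad0, ← Finset.mul_sum, hn0, mul_one] at hle
    linarith
  have part3 : (W.card : ℝ) ≤ lam i₀ := by
    rcases Nat.eq_zero_or_pos W.card with hp | hp
    · rw [hp]; exact_mod_cast hlam0
    · set x1 : ↥W → ℝ := fun _ => 1 with hx1
      have hsum1 : ∑ v : ↥W, x1 v = (W.card : ℝ) := by
        simp [x1, Finset.card_univ, Fintype.card_coe]
      obtain ⟨hk1, hk2⟩ := key x1
      rw [hsum1] at hk1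
      have hn1 : ∑ i, (coords hU (M *ᵥ x1) i) ^ 2 = (W.card : ℝ) := by
        rw [hk2]; simp [x1, Finset.card_univ, Fintype.card_coe]
      have hle : ∑ i, lam i * (coords hU (M *ᵥ x1) i) ^ 2
          ≤ ∑ i, lam i₀ * (coords hU (M *ᵥ x1) i) ^ 2 :=
        Finset.sum_le_sum fun i _ => mul_le_mul_of_nonneg_right (hmax i) (sq_nonneg _)
      rw [hk1, ← Finset.mul_sum, hn1] at hle
      have hcpos : (0 : ℝ) < (W.card : ℝ) := by exact_mod_cast hp
      nlinarith
  -- Part 2 : W.card ≤ #{λ = 0} + #{λ > 0}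
  have part2 : W.card ≤ (Finset.univ.filter fun i : ↥(IH H) => lam i = 0).card +
      (Finset.univ.filter fun i : ↥(IH H) => 0 < lam i).card := by
    let T : (↥W → ℝ) →ₗ[ℝ] ({i : ↥(IH H) // 0 ≤ lam i} → ℝ) :=
      (LinearMap.funLeft ℝ ℝ Subtype.val).comp
        ((star Vm).mulVecLin.comp M.mulVecLin)
    have hTinj : Function.Injective T := by
      rw [← LinearMap.ker_eq_bot, LinearMap.ker_eq_bot']
      intro x hx
      by_contra hxne
      have hcc0 : ∀ i : ↥(IH H), 0 ≤ lam i → coords hU (M *ᵥ x) i = 0 := by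
        intro i hi
        have := congrFun hx (⟨i, hi⟩ : {i : ↥(IH H) // 0 ≤ lam i})
        simpa [T, LinearMap.funLeft, coords, Vm] using this
      obtain ⟨i1, hi1⟩ := Function.ne_iff.mp (hcne x hxne)
      have hlt : lam i1 < 0 := by
        by_contra h
        exact hi1 (by simpa using hcc0 i1 (not_lt.mp h))
      have hsum : ∑ i, lam i * (coords hU (M *ᵥ x) i) ^ 2 < 0 := by
        have := Finset.sum_lt_sum (s := Finset.univ)
          (f := fun i => lam i * (coords hU (M *ᵥ x) i) ^ 2) (g := fun _ => (0 : ℝ))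
          (fun i _ => by
            show lam i * coords hU (M *ᵥ x) i ^ 2 ≤ 0
            rcases le_or_gt 0 (lam i) with h | h
            · rw [hcc0 i h]; simp
            · exact mul_nonpos_iff.mpr (Or.inr ⟨h.le, sq_nonneg _⟩))
          ⟨i1, Finset.mem_univ _, mul_neg_of_neg_of_pos hlt
            ((sq_nonneg _).lt_of_ne (Ne.symm (pow_ne_zero 2 (by simpa using hi1))))⟩
        simpa using this
      have := (key x).1
      nlinarith [sq_nonneg (∑ v, x v)]
    have hcard := card_le_of_inj T hTinj
    rw [Fintype.card_coe, Fintype.card_subtype] at hcard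
    have hsplit : (Finset.univ.filter fun i : ↥(IH H) => 0 ≤ lam i).card
        = (Finset.univ.filter fun i : ↥(IH H) => lam i = 0).card +
          (Finset.univ.filter fun i : ↥(IH H) => 0 < lam i).card := by
      have hset : (Finset.univ.filter fun i : ↥(IH H) => 0 ≤ lam i)
          = (Finset.univ.filter fun i : ↥(IH H) => lam i = 0 ∨ 0 < lam i) := by
        apply Finset.filter_congr
        intro i _
        constructor
        · intro h
          rcases h.lt_or_eq with h' | h'
          · exact Or.inr h'
          · exact Or.inl h'.symm
        · rintro (h | h)
          · exact le_of_eq h.symm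
          · exact h.le
      rw [hset, Finset.filter_or]
      apply Finset.card_union_of_disjoint
      rw [Finset.disjoint_left]
      intro a h1 h2
      simp only [Finset.mem_filter] at h1 h2
      exact absurd h1.2 (by simp [h2.2.ne'])
    omega
  -- Part 1 : W.card ≤ #{λ < 0} + #{λ = 0} + 1
  have part1 : W.card ≤ (Finset.univ.filter fun i : ↥(IH H) => lam i < 0).card +
      (Finset.univ.filter fun i : ↥(IH H) => lam i = 0).card + 1 := by
    let T1 : (↥W → ℝ) →ₗ[ℝ] ℝ × ({i : ↥(IH H) // lam i ≤ 0} → ℝ) :=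
      (sumLM ↥W).prod
        ((LinearMap.funLeft ℝ ℝ Subtype.val).comp
          ((star Vm).mulVecLin.comp M.mulVecLin))
    have hTinj : Function.Injective T1 := by
      rw [← LinearMap.ker_eq_bot, LinearMap.ker_eq_bot']
      intro x hx
      by_contra hxne
      have hx1 : (T1 x).1 = 0 := by rw [hx]; rfl
      have hx2 : (T1 x).2 = 0 := by rw [hx]; rfl
      have hsum0 : ∑ v, x v = 0 := hx1
      have hcc0 : ∀ i : ↥(IH H), lam i ≤ 0 → coords hU (M *ᵥ x) i = 0 := by
        intro i hi
        have := congrFun hx2 (⟨i, hi⟩ : {i : ↥(IH H) // lam i ≤ 0})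
        simpa [T1, LinearMap.funLeft, coords, Vm] using this
      obtain ⟨i1, hi1⟩ := Function.ne_iff.mp (hcne x hxne)
      have hgt : 0 < lam i1 := by
        by_contra h
        exact hi1 (by simpa using hcc0 i1 (not_lt.mp h))
      have hsum : 0 < ∑ i, lam i * (coords hU (M *ᵥ x) i) ^ 2 := by
        have := Finset.sum_lt_sum (s := Finset.univ)
          (f := fun _ => (0 : ℝ)) (g := fun i => lam i * (coords hU (M *ᵥ x) i) ^ 2)
          (fun i _ => by
            show (0:ℝ) ≤ lam i * coords hU (M *ᵥ x) i ^ 2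
            rcases le_or_gt (lam i) 0 with h | h
            · rw [hcc0 i h]; simp
            · positivity)
          ⟨i1, Finset.mem_univ _, mul_pos hgt
            ((sq_nonneg _).lt_of_ne (Ne.symm (pow_ne_zero 2 (by simpa using hi1))))⟩
        simpa using this
      have hq := (key x).1
      rw [hsum0] at hq
      rw [hq] at hsum
      simp at hsum
    have hcard := card_le_of_inj' T1 hTinj
    rw [Fintype.card_coe, Fintype.card_subtype] at hcard
    have hsplit : (Finset.univ.filter fun i : ↥(IH H) => lam i ≤ 0).card
        = (Finset.univ.filter fun i : ↥(IH H) => lam i < 0).card +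
          (Finset.univ.filter fun i : ↥(IH H) => lam i = 0).card := by
      have hset : (Finset.univ.filter fun i : ↥(IH H) => lam i ≤ 0)
          = (Finset.univ.filter fun i : ↥(IH H) => lam i < 0 ∨ lam i = 0) := by
        apply Finset.filter_congr
        intro i _
        constructor
        · intro h
          rcases h.lt_or_eq with h' | h'
          · exact Or.inl h'
          · exact Or.inr h'
        · rintro (h | h)
          · exact h.le
          · exact le_of_eq h
      rw [hset, Finset.filter_or]
      apply Finset.card_union_of_disjoint
      rw [Finset.disjoint_left]
      intro a h1 h2
      simp only [Finset.mem_filter] at h1 h2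
      exact absurd h1.2 (by simp [h2.2])
    omega
  exact ⟨part1, part2, part3⟩
end

section
/- Let H be a unified path whose edges and parts are arranged as an exact path EP: S_0, e_1, S_1, e_2, ..., e_n, S_n with n > 1 and pairwise disjoint parts S_i. If the edges and some parts of H are arranged into another exact path EP₁ with pairwise disjoint parts, then EP₁ is either EP itself or its reverse S_n, e_n, S_{n-1}, ..., e_1, S_0. -/
variable {V : Type} [Fintype V] [DecidableEq V]

/-! ### Auxiliary machinery for the uniqueness theorem -/

set_option linter.unusedSectionVars false

/-- The list of edges (unions of consecutive parts) of a path arrangement. -/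
def edgesL (l : List (Finset V)) : List (Finset V) :=
  (l.zip l.tail).map fun p => p.1 ∪ p.2

@[simp] lemma edgesL_nil : edgesL ([] : List (Finset V)) = [] := rfl

@[simp] lemma edgesL_single (a : Finset V) : edgesL [a] = [] := rfl

@[simp] lemma edgesL_cons₂ (a b : Finset V) (t : List (Finset V)) :
    edgesL (a :: b :: t) = (a ∪ b) :: edgesL (b :: t) := rfl

lemma edgesL_length (l : List (Finset V)) : (edgesL l).length = l.length - 1 := by
  cases l with
  | nil => simp
  | cons a t => simp [edgesL]

lemma mem_edgesL {l : List (Finset V)} {x : Finset V} (hx : x ∈ edgesL l) :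
    ∃ p ∈ l, ∃ q ∈ l, x = p ∪ q := by
  induction l with
  | nil => simp at hx
  | cons a t IH =>
    cases t with
    | nil => simp at hx
    | cons b t' =>
      rw [edgesL_cons₂] at hx
      rcases List.mem_cons.mp hx with h | h
      · exact ⟨a, by simp, b, by simp, h⟩
      · obtain ⟨p, hp, q, hq, h⟩ := IH h
        exact ⟨p, List.mem_cons_of_mem _ hp, q, List.mem_cons_of_mem _ hq, h⟩

lemma edgesL_decomp {l : List (Finset V)} {x : Finset V} (hx : x ∈ edgesL l) :
    ∃ u p q v, l = u ++ p :: q :: v ∧ x = p ∪ q := by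
  induction l with
  | nil => simp at hx
  | cons a t IH =>
    cases t with
    | nil => simp at hx
    | cons b t' =>
      rw [edgesL_cons₂] at hx
      rcases List.mem_cons.mp hx with h | h
      · exact ⟨[], a, b, t', rfl, h⟩
      · obtain ⟨u, p, q, v, hl, h⟩ := IH h
        exact ⟨a :: u, p, q, v, by rw [hl]; rfl, h⟩

lemma pair_mem_edgesL : ∀ (u : List (Finset V)) (p q : Finset V) (v : List (Finset V)),
    p ∪ q ∈ edgesL (u ++ p :: q :: v) := by
  intro u
  induction u with
  | nil => intro p q v; simp
  | cons a u IH =>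
    intro p q v
    cases u with
    | nil => simp
    | cons b u' =>
      rw [List.cons_append, List.cons_append, edgesL_cons₂]
      exact List.mem_cons_of_mem _ (IH p q v)

lemma edgesL_nodup (l : List (Finset V)) (hne : ∀ S ∈ l, S.Nonempty)
    (hd : l.Pairwise Disjoint) : (edgesL l).Nodup := by
  induction l with
  | nil => simp
  | cons a t IH =>
    cases t with
    | nil => simp
    | cons b t' =>
      rw [edgesL_cons₂]
      refine List.nodup_cons.mpr ⟨?_, IH (fun S hS => hne S (List.mem_cons_of_mem _ hS))
        (List.Pairwise.sublist (List.sublist_cons_self _ _) hd)⟩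
      intro hmem
      obtain ⟨p, hp, q, hq, hx⟩ := mem_edgesL hmem
      have hda : ∀ z ∈ b :: t', Disjoint a z := (List.pairwise_cons.mp hd).1
      have hdis : Disjoint a (p ∪ q) := Finset.disjoint_union_right.mpr ⟨hda p hp, hda q hq⟩
      obtain ⟨z, hz⟩ := hne a (by simp)
      exact Finset.disjoint_left.mp hdis hz (hx ▸ Finset.mem_union_left _ hz)

lemma edgesL_append_pair : ∀ (m : List (Finset V)) (x a : Finset V),
    edgesL (m ++ [x, a]) = edgesL (m ++ [x]) ++ [x ∪ a] := by
  intro m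
  induction m with
  | nil => intro x a; simp
  | cons c m IH =>
    intro x a
    cases m with
    | nil => simp
    | cons d m' =>
      rw [List.cons_append, List.cons_append, List.cons_append, List.cons_append,
        edgesL_cons₂, edgesL_cons₂, ← List.cons_append, ← List.cons_append, IH]
      simp

lemma edgesL_reverse : ∀ (l : List (Finset V)), edgesL l.reverse = (edgesL l).reverse := by
  intro l
  induction l with
  | nil => simp
  | cons a m IH =>
    cases m with
    | nil => simp
    | cons b m' =>
      have h1 : (a :: b :: m').reverse = m'.reverse ++ [b, a] := by simp
      rw [h1, edgesL_append_pair]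
      have h2 : m'.reverse ++ [b] = (b :: m').reverse := by simp
      rw [h2, IH, edgesL_cons₂]
      simp [Finset.union_comm]

/-- If two pairwise–disjoint path arrangements have the same multiset of edges and the same
first part, they coincide. -/
lemma edgesL_eq_of_head_eq : ∀ (l l' : List (Finset V)), 2 ≤ l.length → l'.length = l.length →
    (∀ S ∈ l, S.Nonempty) → (∀ S ∈ l', S.Nonempty) →
    l.Pairwise Disjoint → l'.Pairwise Disjoint →
    (edgesL l' : Multiset (Finset V)) = (edgesL l : Multiset (Finset V)) →
    l'.head? = l.head? → l' = l := by
  intro l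
  induction l with
  | nil => intro l' h; simp at h
  | cons a rest IH =>
    intro l' hlen hlen' hne hne' hd hd' hM hh
    cases rest with
    | nil => simp at hlen
    | cons b t =>
      obtain ⟨a', b', t', rfl⟩ : ∃ a' b' t', l' = a' :: b' :: t' := by
        cases l' with
        | nil => simp at hlen'
        | cons a' l₂ =>
          cases l₂ with
          | nil => simp at hlen'
          | cons b' t' => exact ⟨a', b', t', rfl⟩
      obtain rfl : a = a' := by symm; simpa using hh
      have hh' : a ∪ b' ∈ (edgesL (a :: b' :: t') : Multiset (Finset V)) := by simp
      rw [hM] at hh'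
      have he1 : a ∪ b' ∈ edgesL (a :: b :: t) := Multiset.mem_coe.mp hh'
      rw [edgesL_cons₂] at he1
      have hab' : a ∪ b' = a ∪ b := by
        rcases List.mem_cons.mp he1 with h | h
        · exact h
        · exfalso
          obtain ⟨p, hp, q, hq, hx⟩ := mem_edgesL h
          have hda : ∀ z ∈ b :: t, Disjoint a z := (List.pairwise_cons.mp hd).1
          have hdis : Disjoint a (p ∪ q) :=
            Finset.disjoint_union_right.mpr ⟨hda p hp, hda q hq⟩
          obtain ⟨z, hz⟩ := hne a (by simp)
          exact Finset.disjoint_left.mp hdis hz (hx ▸ Finset.mem_union_left _ hz)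
      have hdab' : Disjoint a b' := (List.pairwise_cons.mp hd').1 b' (by simp)
      have hdab : Disjoint a b := (List.pairwise_cons.mp hd).1 b (by simp)
      have hb' : b' = b := by
        ext x
        constructor
        · intro hx
          have h1 : x ∈ a ∪ b := hab' ▸ Finset.mem_union_right _ hx
          rcases Finset.mem_union.mp h1 with h1 | h1
          · exact absurd hx (Finset.disjoint_left.mp hdab' h1)
          · exact h1
        · intro hx
          have h1 : x ∈ a ∪ b' := hab' ▸ Finset.mem_union_right _ hx
          rcases Finset.mem_union.mp h1 with h1 | h1
          · exact absurd hx (Finset.disjoint_left.mp hdab h1)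
          · exact h1
      obtain rfl : b = b' := hb'.symm
      cases t with
      | nil =>
        have : t' = [] := by simpa using hlen'
        rw [this]
      | cons c t₂ =>
        have htl : (b :: t') = (b :: c :: t₂) := by
          refine IH (b :: t') ?_ ?_ ?_ ?_ ?_ ?_ ?_ rfl
          · simp
          · simpa using hlen'
          · exact fun S hS => hne S (List.mem_cons_of_mem _ hS)
          · exact fun S hS => hne' S (List.mem_cons_of_mem _ hS)
          · exact (List.pairwise_cons.mp hd).2
          · exact (List.pairwise_cons.mp hd').2
          · have h2 := hM
            rw [edgesL_cons₂, edgesL_cons₂] at h2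
            rw [← Multiset.cons_coe, ← Multiset.cons_coe] at h2
            exact (Multiset.cons_inj_right _).mp h2
        rw [htl]

/-- If the first edge of `l'` equals the first edge of `l`, then the first parts agree. -/
lemma head_eq_of_first_edge (a b c a' b' c' : Finset V) (t t' : List (Finset V))
    (hne : ∀ S ∈ a :: b :: c :: t, S.Nonempty) (hd : (a :: b :: c :: t).Pairwise Disjoint)
    (hne' : ∀ S ∈ a' :: b' :: c' :: t', S.Nonempty)
    (hd' : (a' :: b' :: c' :: t').Pairwise Disjoint)
    (hM : (edgesL (a' :: b' :: c' :: t') : Multiset (Finset V)) =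
      (edgesL (a :: b :: c :: t) : Multiset (Finset V)))
    (hu : a' ∪ b' = a ∪ b) : a' = a := by
  have hda : ∀ z ∈ b :: c :: t, Disjoint a z := (List.pairwise_cons.mp hd).1
  have hdb : ∀ z ∈ c :: t, Disjoint b z := (List.pairwise_cons.mp (List.pairwise_cons.mp hd).2).1
  have hda' : ∀ z ∈ b' :: c' :: t', Disjoint a' z := (List.pairwise_cons.mp hd').1
  have hdb' : ∀ z ∈ c' :: t', Disjoint b' z :=
    (List.pairwise_cons.mp (List.pairwise_cons.mp hd').2).1
  have ha'e2 : Disjoint a' (b' ∪ c') :=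
    Finset.disjoint_union_right.mpr ⟨hda' b' (by simp), hda' c' (by simp)⟩
  obtain ⟨za, hza⟩ := hne' a' (by simp)
  obtain ⟨zb, hzb⟩ := hne' b' (by simp)
  have h2 : b' ∪ c' ∈ edgesL (a :: b :: c :: t) := by
    have : b' ∪ c' ∈ (edgesL (a' :: b' :: c' :: t') : Multiset (Finset V)) := by simp
    rw [hM] at this
    exact Multiset.mem_coe.mp this
  rw [edgesL_cons₂, edgesL_cons₂] at h2
  have he2 : b' ∪ c' = b ∪ c := by
    rcases List.mem_cons.mp h2 with h | h
    · exfalso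
      have : za ∈ b' ∪ c' := by
        rw [h, ← hu]; exact Finset.mem_union_left _ hza
      exact Finset.disjoint_left.mp ha'e2 hza this
    rcases List.mem_cons.mp h with h | h
    · exact h
    · exfalso
      obtain ⟨p, hp, q, hq, hx⟩ := mem_edgesL h
      have hdis : Disjoint (a ∪ b) (p ∪ q) := by
        refine Finset.disjoint_union_left.mpr ⟨?_, ?_⟩ <;>
          refine Finset.disjoint_union_right.mpr ⟨?_, ?_⟩
        · exact hda p (List.mem_cons_of_mem _ hp)
        · exact hda q (List.mem_cons_of_mem _ hq)
        · exact hdb p hp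
        · exact hdb q hq
      have h1 : zb ∈ a ∪ b := by rw [← hu]; exact Finset.mem_union_right _ hzb
      have h2' : zb ∈ p ∪ q := by rw [← hx]; exact Finset.mem_union_left _ hzb
      exact Finset.disjoint_left.mp hdis h1 h2'
  have hb : b' = b := by
    ext x
    constructor
    · intro hx
      have h1 : x ∈ a ∪ b := by rw [← hu]; exact Finset.mem_union_right _ hx
      have h2' : x ∈ b ∪ c := by rw [← he2]; exact Finset.mem_union_left _ hx
      rcases Finset.mem_union.mp h1 with h1 | h1
      · exfalso
        have : Disjoint a (b ∪ c) :=
          Finset.disjoint_union_right.mpr ⟨hda b (by simp), hda c (by simp)⟩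
        exact Finset.disjoint_left.mp this h1 h2'
      · exact h1
    · intro hx
      have h1 : x ∈ a' ∪ b' := by rw [hu]; exact Finset.mem_union_right _ hx
      have h2' : x ∈ b' ∪ c' := by rw [he2]; exact Finset.mem_union_left _ hx
      rcases Finset.mem_union.mp h1 with h1 | h1
      · exact absurd h2' (Finset.disjoint_left.mp ha'e2 h1)
      · exact h1
  ext x
  constructor
  · intro hx
    have h1 : x ∈ a ∪ b := by rw [← hu]; exact Finset.mem_union_left _ hx
    rcases Finset.mem_union.mp h1 with h1 | h1
    · exact h1
    · exact absurd hx (Finset.disjoint_right.mp (hb ▸ hda' b' (by simp)) h1)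
  · intro hx
    have h1 : x ∈ a' ∪ b' := by rw [hu]; exact Finset.mem_union_left _ hx
    rcases Finset.mem_union.mp h1 with h1 | h1
    · exact h1
    · exact absurd hx (Finset.disjoint_right.mp (hb ▸ hda b (by simp)) h1)

open Classical in
/-- The first edge of `l'` cannot be an interior edge of `l`. -/
lemma first_edge_not_interior (u v : List (Finset V)) (p q a' b' c' : Finset V)
    (t' : List (Finset V)) (hu : u ≠ []) (hv : v ≠ [])
    (hne : ∀ S ∈ u ++ p :: q :: v, S.Nonempty) (hd : (u ++ p :: q :: v).Pairwise Disjoint)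
    (hne' : ∀ S ∈ a' :: b' :: c' :: t', S.Nonempty)
    (hd' : (a' :: b' :: c' :: t').Pairwise Disjoint)
    (hM : (edgesL (a' :: b' :: c' :: t') : Multiset (Finset V)) =
      (edgesL (u ++ p :: q :: v) : Multiset (Finset V)))
    (he : a' ∪ b' = p ∪ q) : False := by
  rcases List.eq_nil_or_concat u with rfl | ⟨u₀, x, rfl⟩
  · exact hu rfl
  rcases v with _ | ⟨y, v₀⟩
  · exact hv rfl
  clear hu hv
  have hl : u₀.concat x ++ p :: q :: y :: v₀ = u₀ ++ x :: p :: q :: y :: v₀ := by simp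
  rw [hl] at hne hd hM
  have hsub : (x :: p :: q :: y :: v₀).Pairwise Disjoint :=
    hd.sublist (List.sublist_append_right _ _)
  have hxp : Disjoint x p := (List.pairwise_cons.mp hsub).1 p (by simp)
  have hxq : Disjoint x q := (List.pairwise_cons.mp hsub).1 q (by simp)
  have hxy : Disjoint x y := (List.pairwise_cons.mp hsub).1 y (by simp)
  have hsub2 := (List.pairwise_cons.mp hsub).2
  have hpq : Disjoint p q := (List.pairwise_cons.mp hsub2).1 q (by simp)
  have hpy : Disjoint p y := (List.pairwise_cons.mp hsub2).1 y (by simp)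
  have hqy : Disjoint q y := (List.pairwise_cons.mp (List.pairwise_cons.mp hsub2).2).1 y (by simp)
  obtain ⟨zp, hzp⟩ := hne p (by simp)
  obtain ⟨zq, hzq⟩ := hne q (by simp)
  set e := p ∪ q with he_def
  set P : Finset V → Prop := fun f => ¬ Disjoint e f with hP
  set M : Multiset (Finset V) :=
    Multiset.filter P (edgesL (u₀ ++ x :: p :: q :: y :: v₀) : Multiset (Finset V)) with hMdef
  have m1 : x ∪ p ∈ edgesL (u₀ ++ x :: p :: q :: y :: v₀) := pair_mem_edgesL u₀ x p (q :: y :: v₀)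
  have m2 : p ∪ q ∈ edgesL (u₀ ++ x :: p :: q :: y :: v₀) := by
    have := pair_mem_edgesL (u₀ ++ [x]) p q (y :: v₀)
    rwa [show u₀ ++ [x] ++ p :: q :: y :: v₀ = u₀ ++ x :: p :: q :: y :: v₀ by simp] at this
  have m3 : q ∪ y ∈ edgesL (u₀ ++ x :: p :: q :: y :: v₀) := by
    have := pair_mem_edgesL (u₀ ++ [x, p]) q y v₀
    rwa [show u₀ ++ [x, p] ++ q :: y :: v₀ = u₀ ++ x :: p :: q :: y :: v₀ by simp] at this
  have P1 : P (x ∪ p) := Finset.not_disjoint_iff.mpr ⟨zp, Finset.mem_union_left _ hzp,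
    Finset.mem_union_right _ hzp⟩
  have P2 : P (p ∪ q) := Finset.not_disjoint_iff.mpr ⟨zp, Finset.mem_union_left _ hzp,
    Finset.mem_union_left _ hzp⟩
  have P3 : P (q ∪ y) := Finset.not_disjoint_iff.mpr ⟨zq, Finset.mem_union_right _ hzq,
    Finset.mem_union_left _ hzq⟩
  have d12 : x ∪ p ≠ p ∪ q := by
    intro h
    have : zq ∈ x ∪ p := by rw [h]; exact Finset.mem_union_right _ hzq
    rcases Finset.mem_union.mp this with h' | h'
    · exact Finset.disjoint_right.mp hxq hzq h'
    · exact Finset.disjoint_right.mp hpq hzq h'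
  have d23 : p ∪ q ≠ q ∪ y := by
    intro h
    have : zp ∈ q ∪ y := by rw [← h]; exact Finset.mem_union_left _ hzp
    rcases Finset.mem_union.mp this with h' | h'
    · exact Finset.disjoint_left.mp hpq hzp h'
    · exact Finset.disjoint_left.mp hpy hzp h'
  have d13 : x ∪ p ≠ q ∪ y := by
    intro h
    have : zp ∈ q ∪ y := by rw [← h]; exact Finset.mem_union_right _ hzp
    rcases Finset.mem_union.mp this with h' | h'
    · exact Finset.disjoint_left.mp hpq hzp h'
    · exact Finset.disjoint_left.mp hpy hzp h'
  have hnd : M.Nodup := Multiset.Nodup.filter _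
    (Multiset.coe_nodup.mpr (edgesL_nodup _ hne hd))
  have hsubF : ({x ∪ p, p ∪ q, q ∪ y} : Finset (Finset V)) ⊆ M.toFinset := by
    intro f hf
    rw [Multiset.mem_toFinset, hMdef, Multiset.mem_filter]
    simp only [Finset.mem_insert, Finset.mem_singleton] at hf
    rcases hf with rfl | rfl | rfl
    · exact ⟨Multiset.mem_coe.mpr m1, P1⟩
    · exact ⟨Multiset.mem_coe.mpr m2, P2⟩
    · exact ⟨Multiset.mem_coe.mpr m3, P3⟩
  have hcard3 : 3 ≤ Multiset.card M := by
    have h1 : ({x ∪ p, p ∪ q, q ∪ y} : Finset (Finset V)).card = 3 := by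
      rw [Finset.card_insert_of_notMem (by simp [d12, d13]),
        Finset.card_insert_of_notMem (by simp [d23]), Finset.card_singleton]
    calc 3 = ({x ∪ p, p ∪ q, q ∪ y} : Finset (Finset V)).card := h1.symm
      _ ≤ M.toFinset.card := Finset.card_le_card hsubF
      _ = Multiset.card M := Multiset.toFinset_card_of_nodup hnd
  have hcard2 : Multiset.card M ≤ 2 := by
    rw [hMdef, ← hM]
    rw [edgesL_cons₂, edgesL_cons₂]
    rw [← Multiset.cons_coe, ← Multiset.cons_coe]
    rw [Multiset.filter_cons, Multiset.filter_cons]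
    have h0 : Multiset.filter P (edgesL (c' :: t') : Multiset (Finset V)) = 0 := by
      rw [Multiset.filter_eq_nil]
      intro f hf
      obtain ⟨p', hp', q', hq', rfl⟩ := mem_edgesL (Multiset.mem_coe.mp hf)
      have hda' : ∀ z ∈ b' :: c' :: t', Disjoint a' z := (List.pairwise_cons.mp hd').1
      have hdb' : ∀ z ∈ c' :: t', Disjoint b' z :=
        (List.pairwise_cons.mp (List.pairwise_cons.mp hd').2).1
      have : Disjoint e (p' ∪ q') := by
        rw [← he]
        refine Finset.disjoint_union_left.mpr ⟨?_, ?_⟩ <;>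
          refine Finset.disjoint_union_right.mpr ⟨?_, ?_⟩
        · exact hda' p' (List.mem_cons_of_mem _ hp')
        · exact hda' q' (List.mem_cons_of_mem _ hq')
        · exact hdb' p' hp'
        · exact hdb' q' hq'
      exact fun hPf => hPf this
    rw [h0]
    split <;> split <;> simp
  omega

theorem unified_path_arrangement_unique (H : FinHypergraph V) (l l' : List (Finset V))
    (hlen : 3 ≤ l.length)
    (hne : ∀ S ∈ l, S.Nonempty) (hdisj : l.Pairwise Disjoint)
    (hE : H.edges = (((l.zip l.tail).map fun p => p.1 ∪ p.2 : List (Finset V)) : Multiset (Finset V)))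
    (hne' : ∀ S ∈ l', S.Nonempty) (hdisj' : l'.Pairwise Disjoint)
    (hE' : H.edges = (((l'.zip l'.tail).map fun p => p.1 ∪ p.2 : List (Finset V)) : Multiset (Finset V))) :
    l' = l ∨ l' = l.reverse := by
  have hM : (edgesL l' : Multiset (Finset V)) = (edgesL l : Multiset (Finset V)) := by
    unfold edgesL
    rw [← hE, ← hE']
  have hlen' : l'.length = l.length := by
    have hc := congrArg Multiset.card hM
    rw [Multiset.coe_card, Multiset.coe_card, edgesL_length, edgesL_length] at hc
    omega
  obtain ⟨a, b, c, t, rfl⟩ : ∃ a b c t, l = a :: b :: c :: t := by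
    match l, hlen with
    | a :: b :: c :: t, _ => exact ⟨a, b, c, t, rfl⟩
  obtain ⟨a', b', c', t', rfl⟩ : ∃ a' b' c' t', l' = a' :: b' :: c' :: t' := by
    match l', hlen' with
    | a' :: b' :: c' :: t', _ => exact ⟨a', b', c', t', rfl⟩
  have he1 : a' ∪ b' ∈ edgesL (a :: b :: c :: t) := by
    have : a' ∪ b' ∈ (edgesL (a' :: b' :: c' :: t') : Multiset (Finset V)) := by simp
    rw [hM] at this
    exact Multiset.mem_coe.mp this
  obtain ⟨u, pp, qq, v, hdec, hpq⟩ := edgesL_decomp he1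
  by_cases hu : u = []
  · subst hu
    obtain ⟨rfl, rfl, rfl⟩ : a = pp ∧ b = qq ∧ c :: t = v := by simpa using hdec
    left
    have ha' : a' = a := head_eq_of_first_edge a b c a' b' c' t t' hne hdisj hne' hdisj' hM hpq
    exact edgesL_eq_of_head_eq _ _ (by simp) hlen' hne hne' hdisj hdisj' hM (by simp [ha'])
  · by_cases hv : v = []
    · subst hv
      obtain ⟨c₂, t₂, hur⟩ : ∃ c₂ t₂, u.reverse = c₂ :: t₂ := by
        cases hur : u.reverse with
        | nil => exact absurd (by simpa using hur) hu
        | cons c₂ t₂ => exact ⟨c₂, t₂, rfl⟩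
      have hrev : (a :: b :: c :: t).reverse = qq :: pp :: c₂ :: t₂ := by
        rw [hdec]
        simp [hur]
      have hne_r : ∀ S ∈ (a :: b :: c :: t).reverse, S.Nonempty := by
        intro S hS; exact hne S (List.mem_reverse.mp hS)
      have hd_r : ((a :: b :: c :: t).reverse).Pairwise Disjoint := by
        rw [List.pairwise_reverse]
        exact hdisj.imp fun h => h.symm
      have hM_r : (edgesL (a' :: b' :: c' :: t') : Multiset (Finset V)) =
          (edgesL ((a :: b :: c :: t).reverse) : Multiset (Finset V)) := by
        rw [edgesL_reverse, Multiset.coe_reverse]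
        exact hM
      have ha' : a' = qq := by
        refine head_eq_of_first_edge qq pp c₂ a' b' c' t₂ t' ?_ ?_ hne' hdisj' ?_ ?_
        · rw [← hrev]; exact hne_r
        · rw [← hrev]; exact hd_r
        · rw [← hrev]; exact hM_r
        · rw [hpq]; exact Finset.union_comm _ _
      right
      refine edgesL_eq_of_head_eq ((a :: b :: c :: t).reverse) _ ?_ ?_ hne_r hne' hd_r hdisj'
        hM_r ?_
      · rw [hrev]; simp
      · simp [hlen']
      · rw [hrev]; simp [ha']
    · exact absurd hpq
        (by
          intro hpq'
          exact first_edge_not_interior u v pp qq a' b' c' t' hu hv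
            (by rw [← hdec]; exact hne) (by rw [← hdec]; exact hdisj) hne' hdisj'
            (by rw [← hdec]; exact hM) hpq')
end
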